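/- arXiv:2506.09318 — 5 statements merged into one kernel-verified Lean document; each statement's English description precedes it below -/
import Mathlib

section
/- Let M ≥ 2 be an even natural number. Then for every k ∈ {1,…,M}, Σ_{j=0}^{M−1} u_j(0)·u_j(s_k) = (1/M)·(−1)^{k+M/2}·tan((2k−1)π/(2M)), where u_j are the normalized Chebyshev polynomials and s_k are the Chebyshev nodes of order M. -/
/-- The `k`-th Chebyshev node of order `M`: `s_k = cos((2k-1)π/(2M))`. -/
noncomputable def chebNode (M k : ℕ) : ℝ :=
  Real.cos ((2 * (k : ℝ) - 1) * Real.pi / (2 * (M : ℝ)))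

/-- The normalized Chebyshev polynomials: `u_0(s) = √(1/M) T_0(s)` and
`u_j(s) = √(2/M) T_j(s)` for `j ≥ 1`, where `T_j(s) = cos(j arccos s)`. -/
noncomputable def chebU (M j : ℕ) (s : ℝ) : ℝ :=
  (if j = 0 then Real.sqrt (1 / (M : ℝ)) else Real.sqrt (2 / (M : ℝ))) *
    Real.cos ((j : ℝ) * Real.arccos s)

open Finset in
lemma cheb_sum_even_of_odd_zero (f : ℕ → ℝ) (h : ∀ j, f (2*j+1) = 0) (N : ℕ) :
    ∑ j ∈ Finset.range (2*N), f j = ∑ m ∈ Finset.range N, f (2*m) := by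
  induction N with
  | zero => simp
  | succ n ih =>
    rw [show 2*(n+1) = (2*n+1)+1 by ring, Finset.sum_range_succ, Finset.sum_range_succ,
      ih, Finset.sum_range_succ, h, add_zero]

open Finset in
lemma cheb_key (θ : ℝ) (N : ℕ) :
    2 * Real.cos θ * ∑ m ∈ Finset.range N, (-1:ℝ)^m * Real.cos (2*(m:ℝ)*θ) =
      Real.cos θ - (-1:ℝ)^N * Real.cos ((2*(N:ℝ)-1)*θ) := by
  induction N with
  | zero => simp [show ((2:ℝ)*0-1)*θ = -θ by ring, Real.cos_neg]
  | succ n ih =>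
    rw [Finset.sum_range_succ, mul_add, ih]
    have e1 : Real.cos ((2*(n:ℝ)-1)*θ)
        = Real.cos (2*(n:ℝ)*θ)*Real.cos θ + Real.sin (2*(n:ℝ)*θ)*Real.sin θ := by
      rw [show (2*(n:ℝ)-1)*θ = 2*(n:ℝ)*θ - θ by ring, Real.cos_sub]
    push_cast
    rw [show (2*((n:ℝ)+1)-1)*θ = 2*(n:ℝ)*θ + θ by ring, Real.cos_add, e1, pow_succ]
    ring

open Finset in
/-- Closed form of the Chebyshev interpolation weights at `0`:
`∑_{j=0}^{M-1} u_j(0) u_j(s_k) = (1/M) (-1)^{k+M/2} tan((2k-1)π/(2M))` for even `M`. -/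
theorem stmt_6 (M : ℕ) (hM : 2 ≤ M) (hMe : Even M) (k : ℕ) (hk : k ∈ Finset.Icc 1 M) :
    (∑ j ∈ Finset.range M, chebU M j 0 * chebU M j (chebNode M k)) =
      (1 / (M : ℝ)) * (-1 : ℝ) ^ (k + M / 2) *
        Real.tan ((2 * (k : ℝ) - 1) * Real.pi / (2 * (M : ℝ))) := by
  simp only [Finset.mem_Icc] at hk
  obtain ⟨hk1, hkM⟩ := hk
  set N := M / 2 with hNdef
  obtain ⟨N', hMN'⟩ := hMe
  have hMN : M = 2 * N := by omega
  have hN1 : 1 ≤ N := by omega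
  have hMpos : (0:ℝ) < M := by positivity
  have hMne : (M:ℝ) ≠ 0 := ne_of_gt hMpos
  have hM2N : (M:ℝ) = 2*(N:ℝ) := by exact_mod_cast congrArg Nat.cast hMN
  have hNne : (N:ℝ) ≠ 0 := by positivity
  set θ : ℝ := (2 * (k : ℝ) - 1) * Real.pi / (2 * (M : ℝ)) with hθdef
  have hpi := Real.pi_pos
  have h2k1 : (1:ℝ) ≤ 2 * (k:ℝ) - 1 := by
    have : (1:ℝ) ≤ (k:ℝ) := by exact_mod_cast hk1
    linarith
  have hθ0 : 0 ≤ θ := by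
    apply div_nonneg (by nlinarith) (by linarith)
  have hθπ : θ ≤ Real.pi := by
    rw [hθdef, div_le_iff₀ (by linarith)]
    have : (k:ℝ) ≤ M := by exact_mod_cast hkM
    nlinarith
  have harccos : Real.arccos (Real.cos θ) = θ := Real.arccos_cos hθ0 hθπ
  have hcosne : Real.cos θ ≠ 0 := by
    intro h
    rw [Real.cos_eq_zero_iff] at h
    obtain ⟨n, hn⟩ := h
    rw [hθdef] at hn
    have hpine : Real.pi ≠ 0 := ne_of_gt hpi
    have h1 : (2 * (k : ℝ) - 1) * Real.pi = (2 * (n:ℝ) + 1) * (M:ℝ) * Real.pi := by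
      field_simp at hn
      linear_combination Real.pi * hn
    have h2 : (2 * (k : ℝ) - 1) = (2 * (n:ℝ) + 1) * (M:ℝ) :=
      mul_right_cancel₀ hpine h1
    rw [hM2N] at h2
    have h3 : (2 * (k:ℤ) - 1) = (2 * n + 1) * (2 * (N:ℤ)) := by exact_mod_cast h2
    have h4 : (2:ℤ) ∣ (2 * n + 1) * (2 * (N:ℤ)) := ⟨(2*n+1)*N, by ring⟩
    rw [← h3] at h4
    omega
  have hnode : chebNode M k = Real.cos θ := rfl
  have hterm : ∀ j : ℕ, chebU M j 0 * chebU M j (chebNode M k) =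
      (if j = 0 then 1/(M:ℝ) else 2/(M:ℝ)) * (Real.cos ((j:ℝ)*(Real.pi/2)) * Real.cos ((j:ℝ)*θ)) := by
    intro j
    rw [chebU, chebU, hnode, harccos, Real.arccos_zero]
    rcases eq_or_ne j 0 with h | h <;>
      simp only [h, if_true, if_false, reduceIte] <;>
      rw [show ∀ a b c : ℝ, a * b * (a * c) = (a*a) * (b*c) by intros; ring,
        Real.mul_self_sqrt (by positivity)]
  rw [Finset.sum_congr rfl (fun j _ => hterm j)]
  have hodd : ∀ m : ℕ, (fun j : ℕ => (if j = 0 then 1/(M:ℝ) else 2/(M:ℝ)) *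
      (Real.cos ((j:ℝ)*(Real.pi/2)) * Real.cos ((j:ℝ)*θ))) (2*m+1) = 0 := by
    intro m
    show (if 2*m+1 = 0 then 1/(M:ℝ) else 2/(M:ℝ)) *
      (Real.cos (((2*m+1:ℕ):ℝ)*(Real.pi/2)) * Real.cos (((2*m+1:ℕ):ℝ)*θ)) = 0
    rw [show ((2*m+1:ℕ):ℝ)*(Real.pi/2) = Real.pi/2 + (m:ℕ)*Real.pi by push_cast; ring,
      Real.cos_add_nat_mul_pi, Real.cos_pi_div_two]
    ring
  rw [show Finset.range M = Finset.range (2*N) by rw [← hMN], cheb_sum_even_of_odd_zero _ hodd N]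
  have heven : ∀ m : ℕ, (if 2*m = 0 then 1/(M:ℝ) else 2/(M:ℝ)) *
      (Real.cos (((2*m:ℕ):ℝ)*(Real.pi/2)) * Real.cos (((2*m:ℕ):ℝ)*θ)) =
      (2/(M:ℝ)) * ((-1:ℝ)^m * Real.cos (2*(m:ℝ)*θ)) + (if m = 0 then -(1/(M:ℝ)) else 0) := by
    intro m
    have hc : Real.cos (((2*m:ℕ):ℝ)*(Real.pi/2)) = (-1:ℝ)^m := by
      rw [show ((2*m:ℕ):ℝ)*(Real.pi/2) = 0 + (m:ℕ)*Real.pi by push_cast; ring,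
        Real.cos_add_nat_mul_pi, Real.cos_zero, mul_one]
    rw [hc]
    rcases eq_or_ne m 0 with h | h
    · simp [h]
      ring
    · have h2 : 2*m ≠ 0 := by omega
      simp only [h2, h, if_false, reduceIte]
      push_cast
      ring
  rw [Finset.sum_congr rfl (fun m _ => heven m), Finset.sum_add_distrib,
    Finset.sum_ite_eq' (Finset.range N) 0 (fun _ => -(1/(M:ℝ))),
    if_pos (Finset.mem_range.mpr (by omega)), ← Finset.mul_sum]
  have hkey := cheb_key θ N
  have hMθ : 2*(N:ℝ)*θ = (k:ℕ)*Real.pi - Real.pi/2 := by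
    rw [hθdef, hM2N]
    field_simp
  have hcN : Real.cos ((2*(N:ℝ)-1)*θ) = -(-1:ℝ)^k * Real.sin θ := by
    rw [show (2*(N:ℝ)-1)*θ = 2*(N:ℝ)*θ - θ by ring, Real.cos_sub, hMθ,
      show ((k:ℕ):ℝ)*Real.pi - Real.pi/2 = ((k:ℕ):ℝ)*Real.pi - Real.pi/2 from rfl]
    rw [show ∀ x:ℝ, x*Real.pi - Real.pi/2 = x*Real.pi - Real.pi/2 from fun _ => rfl]
    rw [Real.cos_nat_mul_pi_sub, Real.sin_nat_mul_pi_sub, Real.cos_pi_div_two, Real.sin_pi_div_two]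
    ring
  rw [hcN] at hkey
  have hS : ∑ m ∈ Finset.range N, (-1:ℝ)^m * Real.cos (2*(m:ℝ)*θ)
      = (Real.cos θ + (-1:ℝ)^(k+N) * Real.sin θ) / (2*Real.cos θ) := by
    rw [eq_div_iff (mul_ne_zero two_ne_zero hcosne), pow_add]
    linear_combination hkey
  rw [hS, Real.tan_eq_sin_div_cos, pow_add]
  field_simp
  ring
end

section
/- Let M ≥ 2 be an even natural number, let s_k = cos((2k−1)π/(2M)) for k ∈ {1,…,M} be the Chebyshev nodes, and define d_k = (1/M)·(−1)^{k+M/2}·tan((2k−1)π/(2M)). Then for any function f : ℝ → ℂ, the unique polynomial P of degree at most M−1 satisfying P(s_k) = f(s_k) for all k ∈ {1,…,M} satisfies P(0) = Σ_{k=1}^{M} d_k · f(s_k). -/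
/-- The Chebyshev interpolation weight for evaluation at `0`:
`d_k = (1/M) (-1)^{k+M/2} tan((2k-1)π/(2M))`. -/
noncomputable def chebWeight (M k : ℕ) : ℝ :=
  (1 / (M : ℝ)) * (-1 : ℝ) ^ (k + M / 2) *
    Real.tan ((2 * (k : ℝ) - 1) * Real.pi / (2 * (M : ℝ)))

open Polynomial Polynomial.Chebyshev in
lemma chebT_deg_lc : ∀ n : ℕ, (T ℂ n).natDegree = n ∧ (T ℂ n).leadingCoeff = 2 ^ (n - 1) := by
  intro n
  induction n using Nat.strong_induction_on with
  | _ n ih =>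
    match n with
    | 0 => simp [T_zero]
    | 1 => simp [T_one]
    | (n+2) =>
      obtain ⟨hd1, hl1⟩ := ih (n+1) (by omega)
      obtain ⟨hd0, hl0⟩ := ih n (by omega)
      rw [show ((n+1:ℕ):ℤ) = (n:ℤ)+1 by push_cast; ring] at hd1 hl1
      have hT1ne : T ℂ ((n:ℤ)+1) ≠ 0 := by
        intro h
        rw [h] at hl1
        simp at hl1
        exact (pow_ne_zero _ (two_ne_zero)) hl1.symm
      have hrec : T ℂ ((n:ℤ)+2) = 2 * X * T ℂ ((n:ℤ)+1) - T ℂ n := T_add_two ℂ n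
      have hXne : (2 * X : ℂ[X]) ≠ 0 := by
        intro h
        have := congrArg (fun p => Polynomial.coeff p 1) h
        simp at this
      have hdX : (2 * X : ℂ[X]).natDegree = 1 := by
        compute_degree!
      have hdp : (2 * X * T ℂ ((n:ℤ)+1)).natDegree = n + 2 := by
        rw [natDegree_mul hXne hT1ne, hdX]
        omega
      have hlcX : (2 * X : ℂ[X]).leadingCoeff = 2 := by
        have h2 : (2:ℂ[X]) = C 2 := by norm_cast
        rw [leadingCoeff_mul, leadingCoeff_X, mul_one, h2, leadingCoeff_C]
      have hlp : (2 * X * T ℂ ((n:ℤ)+1)).leadingCoeff = 2 ^ (n+1) := by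
        rw [leadingCoeff_mul, hlcX, hl1]
        rw [show n + 1 - 1 = n from rfl]
        ring
      have hdlt : (T ℂ (n:ℤ)).natDegree < (2 * X * T ℂ ((n:ℤ)+1)).natDegree := by
        rw [hdp, hd0]; omega
      have hcast : ((n:ℤ)+2) = ((n+2 : ℕ) : ℤ) := by push_cast; ring
      constructor
      · rw [← hcast, hrec, natDegree_sub_eq_left_of_natDegree_lt hdlt, hdp]
      · rw [← hcast, hrec, leadingCoeff_sub_of_degree_lt, hlp]
        · simp
        · exact degree_lt_degree hdlt

open Finset Polynomial Polynomial.Chebyshev in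
/-- Evaluation at `0` of the Chebyshev interpolant: any polynomial `P` of degree at most
`M - 1` agreeing with `f` at the `M` Chebyshev nodes satisfies
`P(0) = ∑_{k=1}^M d_k f(s_k)`. -/
theorem stmt_7 (M : ℕ) (hM : 2 ≤ M) (hMe : Even M) (f : ℝ → ℂ)
    (P : Polynomial ℂ) (hdeg : P.degree < M)
    (hP : ∀ k ∈ Finset.Icc 1 M, P.eval ((chebNode M k : ℝ) : ℂ) = f (chebNode M k)) :
    P.eval 0 = ∑ k ∈ Finset.Icc 1 M, (chebWeight M k : ℂ) * f (chebNode M k) := by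
  classical
  obtain ⟨m, hm⟩ := hMe
  have hMR : (M:ℝ) ≠ 0 := Nat.cast_ne_zero.mpr (by omega)
  have hpi := Real.pi_pos
  set a : ℕ → ℝ := fun k => (2*(k:ℝ)-1)*Real.pi/(2*(M:ℝ)) with ha
  have hnode : ∀ k, chebNode M k = Real.cos (a k) := fun k => rfl
  set v : ℕ → ℂ := fun k => ((chebNode M k : ℝ) : ℂ) with hv
  -- basic facts about the angles
  have haux : ∀ k ∈ Finset.Icc 1 M, 0 < a k ∧ a k < Real.pi ∧ Real.cos (a k) ≠ 0 := by
    intro k hk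
    rw [Finset.mem_Icc] at hk
    have hk1 : (1:ℝ) ≤ (k:ℝ) := by exact_mod_cast hk.1
    have hkM : (k:ℝ) ≤ (M:ℝ) := by exact_mod_cast hk.2
    have h1 : 0 < a k := by
      rw [ha]
      apply div_pos (by nlinarith) (by positivity)
    have h2 : a k < Real.pi := by
      rw [ha]
      rw [div_lt_iff₀ (by positivity)]
      nlinarith
    refine ⟨h1, h2, ?_⟩
    intro hc
    have hpi2 : Real.cos (Real.pi/2) = 0 := Real.cos_pi_div_two
    have heq : a k = Real.pi/2 := by
      apply Real.injOn_cos ⟨le_of_lt h1, le_of_lt h2⟩ ⟨by positivity, by linarith⟩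
      rw [hc, hpi2]
    rw [ha] at heq
    simp only at heq
    have h3 : (2*(k:ℝ)-1) * 2 = 2*(M:ℝ) := by
      have := Real.pi_ne_zero
      field_simp at heq
      nlinarith [Real.pi_ne_zero, Real.pi_pos, heq]
    have h4 : (2*k : ℕ) = M + 1 := by
      have : (2*(k:ℝ)) = (M:ℝ) + 1 := by linarith
      exact_mod_cast this
    omega
  have hsin : ∀ k ∈ Finset.Icc 1 M, Real.sin (a k) ≠ 0 := by
    intro k hk
    obtain ⟨h1, h2, _⟩ := haux k hk
    exact ne_of_gt (Real.sin_pos_of_pos_of_lt_pi h1 h2)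
  -- injectivity of nodes
  have hinj : Set.InjOn v (Finset.Icc 1 M) := by
    intro k hk l hl hkl
    simp only [Finset.coe_Icc, Set.mem_Icc] at hk hl
    obtain ⟨hk0, hkπ, _⟩ := haux k (Finset.mem_Icc.mpr hk)
    obtain ⟨hl0, hlπ, _⟩ := haux l (Finset.mem_Icc.mpr hl)
    have h1 : Real.cos (a k) = Real.cos (a l) := by
      have : ((Real.cos (a k) : ℝ) : ℂ) = ((Real.cos (a l) : ℝ) : ℂ) := by
        rw [hv] at hkl; simpa [hnode] using hkl
      exact_mod_cast this
    have h2 : a k = a l := Real.injOn_cos ⟨le_of_lt hk0, le_of_lt hkπ⟩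
      ⟨le_of_lt hl0, le_of_lt hlπ⟩ h1
    rw [ha] at h2
    simp only at h2
    field_simp at h2
    have h2' : (k:ℝ) = l := by linarith
    exact_mod_cast h2'
  have hcard : (Finset.Icc 1 M).card = M := by
    rw [Nat.card_Icc]; omega
  -- P is the interpolant
  have hPint : P = Lagrange.interpolate (Finset.Icc 1 M) v (fun k => f (chebNode M k)) :=
    Lagrange.eq_interpolate_of_eval_eq _ hinj (by rw [hcard]; exact hdeg) hP
  have h0 : ∀ i ∈ Finset.Icc 1 M, (0:ℂ) ≠ v i := by
    intro i hi hcontra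
    obtain ⟨_, _, hc⟩ := haux i hi
    apply hc
    have h1 : ((Real.cos (a i) : ℝ) : ℂ) = 0 := by
      simpa [hv, hnode] using hcontra.symm
    exact_mod_cast h1
  -- nodes are roots of T M
  have hMa : ∀ k : ℕ, k ∈ Finset.Icc 1 M → (M:ℝ) * a k = (k:ℝ)*Real.pi - Real.pi/2 := by
    intro k _
    rw [ha]
    field_simp
  have hroot : ∀ k ∈ Finset.Icc 1 M, (T ℂ (M:ℤ)).eval (v k) = 0 := by
    intro k hk
    have h1 : v k = Complex.cos ((a k : ℝ) : ℂ) := by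
      rw [hv]; simp [hnode, Complex.ofReal_cos]
    rw [h1, T_complex_cos]
    have h2 : ((M:ℤ):ℂ) * ((a k:ℝ):ℂ) = (((k:ℝ)*Real.pi - Real.pi/2 : ℝ) : ℂ) := by
      have h3 := congrArg (fun x : ℝ => (x:ℂ)) (hMa k hk)
      push_cast at h3 ⊢
      exact h3
    rw [h2, ← Complex.ofReal_cos, Real.cos_nat_mul_pi_sub, Real.cos_pi_div_two]
    simp
  -- the nodal polynomial identity
  set N : Polynomial ℂ := Lagrange.nodal (Finset.Icc 1 M) v with hN
  obtain ⟨hTdeg, hTlc⟩ := chebT_deg_lc M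
  have hTne : T ℂ (M:ℤ) ≠ 0 := by
    intro h
    rw [h] at hTlc
    simp at hTlc
    exact (pow_ne_zero _ (two_ne_zero)) hTlc.symm
  set c : ℂ := 2^(M-1) with hc
  have hcne : c ≠ 0 := pow_ne_zero _ two_ne_zero
  have hNdeg : (C c * N).degree = (M : ℕ) := by
    rw [Polynomial.degree_C_mul hcne, hN, Lagrange.degree_nodal, hcard]
  have hNlc : (C c * N).leadingCoeff = c := by
    rw [leadingCoeff_mul, leadingCoeff_C, Lagrange.nodal_monic.leadingCoeff, mul_one]
  have hNid : T ℂ (M:ℤ) = C c * N := by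
    have hd1 : (T ℂ (M:ℤ)).degree = (C c * N).degree := by
      rw [hNdeg, Polynomial.degree_eq_natDegree hTne, hTdeg]
    have hl1 : (T ℂ (M:ℤ)).leadingCoeff = (C c * N).leadingCoeff := by
      rw [hTlc, hNlc]
    have hdQ : (T ℂ (M:ℤ) - C c * N).degree < (M:ℕ) := by
      have h := Polynomial.degree_sub_lt hd1 hTne hl1
      rwa [Polynomial.degree_eq_natDegree hTne, hTdeg] at h
    have hQz : T ℂ (M:ℤ) - C c * N = 0 := by
      by_contra hQ
      apply hQ
      apply Polynomial.eq_zero_of_natDegree_lt_card_of_eval_eq_zero' _ ((Finset.Icc 1 M).image v)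
      · intro x hx
        obtain ⟨k, hk, rfl⟩ := Finset.mem_image.mp hx
        simp [hroot k hk, hN, Lagrange.eval_nodal_at_node hk]
      · rw [Finset.card_image_of_injOn hinj, hcard]
        exact (Polynomial.natDegree_lt_iff_degree_lt hQ).mpr hdQ
    exact sub_eq_zero.mp hQz
  -- value of the nodal polynomial at 0
  have hT0 : (T ℂ (M:ℤ)).eval 0 = (((-1:ℝ)^m : ℝ) : ℂ) := by
    have h0c : (0:ℂ) = Complex.cos ((Real.pi/2 : ℝ):ℂ) := by
      rw [← Complex.ofReal_cos, Real.cos_pi_div_two, Complex.ofReal_zero]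
    rw [h0c, T_complex_cos]
    have h2 : ((M:ℤ):ℂ) * ((Real.pi/2 : ℝ):ℂ) = (((m:ℝ)*Real.pi - 0 : ℝ):ℂ) := by
      push_cast [hm]; ring
    rw [h2, ← Complex.ofReal_cos, Real.cos_nat_mul_pi_sub, Real.cos_zero]
    norm_num
  have hN0 : N.eval 0 = (((-1:ℝ)^m : ℝ) : ℂ) / c := by
    have h1 := congrArg (Polynomial.eval (0:ℂ)) hNid
    rw [hT0, Polynomial.eval_mul, Polynomial.eval_C] at h1
    rw [eq_div_iff hcne, hc] at *
    linear_combination -h1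
  -- derivative of the nodal polynomial at the nodes
  have hsinMa : ∀ k ∈ Finset.Icc 1 M, Real.sin ((M:ℝ) * a k) = (-1:ℝ)^(k+1) := by
    intro k hk
    rw [hMa k hk, Real.sin_nat_mul_pi_sub, Real.sin_pi_div_two]
    ring
  have hderivN : ∀ k ∈ Finset.Icc 1 M,
      (Polynomial.derivative N).eval (v k)
        = (M:ℂ) * ((((-1:ℝ)^(k+1) / Real.sin (a k)) : ℝ) : ℂ) / c := by
    intro k hk
    have hvk : v k = Complex.cos ((a k : ℝ):ℂ) := by
      rw [hv]; simp [hnode, Complex.ofReal_cos]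
    have hU : (U ℂ ((M:ℤ)-1)).eval (v k) * Complex.sin ((a k : ℝ):ℂ)
        = ((((-1:ℝ)^(k+1)) : ℝ) : ℂ) := by
      rw [hvk, U_complex_cos]
      have h2 : (((M:ℤ) - 1 : ℤ):ℂ) + 1 = (((M:ℝ)):ℝ) := by push_cast; ring
      rw [h2]
      rw [show ((((M:ℝ)):ℝ):ℂ) * ((a k : ℝ):ℂ) = (((M:ℝ) * a k : ℝ):ℂ) by push_cast; ring]
      rw [← Complex.ofReal_sin, hsinMa k hk]
    have hsk : ((Real.sin (a k) : ℝ) : ℂ) ≠ 0 := by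
      exact_mod_cast Complex.ofReal_ne_zero.mpr (hsin k hk)
    have hUval : (U ℂ ((M:ℤ)-1)).eval (v k)
        = ((((-1:ℝ)^(k+1) / Real.sin (a k)) : ℝ) : ℂ) := by
      rw [eq_comm, Complex.ofReal_div, div_eq_iff hsk, ← hU]
      rw [Complex.ofReal_sin]
    have hD := congrArg Polynomial.derivative hNid
    rw [T_derivative_eq_U, Polynomial.derivative_C_mul] at hD
    have hD2 := congrArg (Polynomial.eval (v k)) hD
    simp only [Polynomial.eval_mul, Polynomial.eval_intCast, Polynomial.eval_C] at hD2
    rw [hUval] at hD2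
    rw [eq_div_iff hcne]
    push_cast at hD2 ⊢
    linear_combination -hD2
  -- put everything together
  rw [hPint, Lagrange.eval_interpolate_not_at_node _ h0, Finset.mul_sum]
  apply Finset.sum_congr rfl
  intro k hk
  rw [Lagrange.nodalWeight_eq_eval_derivative_nodal hk, hderivN k hk, hN0]
  have hm2 : M / 2 = m := by omega
  have hca := (haux k hk).2.2
  have hsa := hsin k hk
  have hcoef : (((-1:ℝ)^m : ℝ) : ℂ) / c *
      (((M:ℂ) * ((((-1:ℝ)^(k+1) / Real.sin (a k)) : ℝ) : ℂ) / c)⁻¹ * (0 - v k)⁻¹)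
      = ((chebWeight M k : ℝ) : ℂ) := by
    have hvk : v k = ((Real.cos (a k) : ℝ) : ℂ) := by rw [hv]; simp [hnode]
    have hcR : c = (((2:ℝ)^(M-1) : ℝ) : ℂ) := by rw [hc]; push_cast; ring
    rw [hvk, hcR]
    have hw : chebWeight M k = (1 / (M : ℝ)) * (-1 : ℝ) ^ (k + m) *
        (Real.sin (a k) / Real.cos (a k)) := by
      simp only [chebWeight, hm2, Real.tan_eq_sin_div_cos, ha]
    rw [hw]
    push_cast
    have hcaC : Complex.cos ((a k : ℝ) : ℂ) ≠ 0 := by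
      rw [← Complex.ofReal_cos]; exact Complex.ofReal_ne_zero.mpr hca
    have hsaC : Complex.sin ((a k : ℝ) : ℂ) ≠ 0 := by
      rw [← Complex.ofReal_sin]; exact Complex.ofReal_ne_zero.mpr hsa
    have h2C : ((2:ℂ)^(M-1)) ≠ 0 := pow_ne_zero _ two_ne_zero
    have hMC : ((M:ℕ):ℂ) ≠ 0 := Nat.cast_ne_zero.mpr (by omega)
    rcases Nat.even_or_odd k with hk2 | hk2 <;>
      rcases Nat.even_or_odd m with hm2' | hm2' <;>
      simp only [pow_add, pow_one, hk2.neg_one_pow, hm2'.neg_one_pow] <;>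
      field_simp <;>
      ring
  calc (((-1:ℝ)^m : ℝ) : ℂ) / c *
      (((M:ℂ) * ((((-1:ℝ)^(k+1) / Real.sin (a k)) : ℝ) : ℂ) / c)⁻¹ * (0 - v k)⁻¹
        * f (chebNode M k))
      = ((((-1:ℝ)^m : ℝ) : ℂ) / c *
        (((M:ℂ) * ((((-1:ℝ)^(k+1) / Real.sin (a k)) : ℝ) : ℂ) / c)⁻¹ * (0 - v k)⁻¹))
        * f (chebNode M k) := by ring
    _ = ((chebWeight M k : ℝ) : ℂ) * f (chebNode M k) := by rw [hcoef]
end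

section
/- Let H be an N×N Hermitian complex matrix, let L be an arbitrary N×N complex matrix, and let β ≥ 0. Then |Tr(exp(−β(H + L)))| ≤ e^{β‖L‖} · Tr(exp(−βH)), where ‖L‖ denotes the operator (spectral) norm of L and exp is the matrix exponential. -/
open scoped Matrix.Norms.L2Operator Nat
open Matrix Module

theorem schur_flag (n : ℕ) : ∀ (E : Type) [NormedAddCommGroup E] [InnerProductSpace ℂ E],
    ∀ (_ : FiniteDimensional ℂ E) (_ : Module.finrank ℂ E = n) (f : E →ₗ[ℂ] E),
    ∃ b : Fin n → E, Orthonormal ℂ b ∧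
      ∀ i : Fin n, f (b i) ∈ Submodule.span ℂ (b '' Set.Iic i) := by
  induction n with
  | zero =>
    intro E _ _ _ _ f
    exact ⟨Fin.elim0, ⟨fun i => i.elim0, fun i => i.elim0⟩, fun i => i.elim0⟩
  | succ n ih =>
    intro E _ _ _ hrank f
    have hnt : Nontrivial E := by
      apply Module.nontrivial_of_finrank_pos (R := ℂ)
      omega
    obtain ⟨μ, hμ⟩ := Module.End.exists_eigenvalue
      (LinearMap.adjoint f : Module.End ℂ E)
    obtain ⟨v, hv⟩ := hμ.exists_hasEigenvector
    have hv0 : v ≠ 0 := hv.right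
    set K : Submodule ℂ E := (ℂ ∙ v)ᗮ with hK
    have : Fact (finrank ℂ E = n + 1) := ⟨hrank⟩
    have hKrank : finrank ℂ K = n := Submodule.finrank_orthogonal_span_singleton hv0
    have hKinv : ∀ x ∈ K, f x ∈ K := by
      intro x hx
      rw [hK, Submodule.mem_orthogonal] at hx ⊢
      intro w hw
      obtain ⟨c, rfl⟩ := Submodule.mem_span_singleton.mp hw
      have h1 : inner ℂ (LinearMap.adjoint f v) x = (inner ℂ v (f x) : ℂ) :=
        LinearMap.adjoint_inner_left f x v
      rw [hv.apply_eq_smul, inner_smul_left] at h1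
      rw [inner_smul_left, ← h1, hx v (Submodule.mem_span_singleton_self v), mul_zero, mul_zero]
    set fK : K →ₗ[ℂ] K := f.restrict hKinv with hfK
    obtain ⟨b', hb'on, hb'flag⟩ := ih K inferInstance hKrank fK
    set u : E := (‖v‖ : ℂ)⁻¹ • v with hu
    have hunorm : ‖u‖ = 1 := by
      rw [hu, norm_smul, norm_inv, Complex.norm_real, Real.norm_eq_abs, abs_norm,
        inv_mul_cancel₀ (norm_ne_zero_iff.mpr hv0)]
    have humem : u ∈ (ℂ ∙ v) := Submodule.smul_mem _ _ (Submodule.mem_span_singleton_self v)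
    set b : Fin (n + 1) → E := Fin.snoc (fun i => (b' i : E)) u with hb
    have hbcs : ∀ j : Fin n, b j.castSucc = (b' j : E) := fun j => Fin.snoc_castSucc _ _ _
    have hblast : b (Fin.last n) = u := Fin.snoc_last _ _
    have hon : Orthonormal ℂ b := by
      rw [orthonormal_iff_ite]
      intro i j
      refine Fin.lastCases ?_ ?_ i <;> [skip; intro i'] <;>
        refine Fin.lastCases ?_ ?_ j <;> [skip; intro j'; skip; intro j']
      · simp only [hblast, if_pos rfl]
        rw [inner_self_eq_norm_sq_to_K, hunorm]; norm_num
      · rw [hblast, hbcs]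
        rw [if_neg (by simp [Fin.ext_iff]; omega)]
        exact ((b' j').2 u humem)
      · rw [hblast, hbcs]
        rw [if_neg (by simp [Fin.ext_iff]; omega)]
        rw [← inner_conj_symm]
        rw [(b' i').2 u humem, map_zero]
      · simp only [hbcs, Fin.castSucc_inj]
        exact (orthonormal_iff_ite.mp hb'on) i' j'
    refine ⟨b, hon, ?_⟩
    intro i
    refine Fin.lastCases ?_ ?_ i
    · have hspan : Submodule.span ℂ (Set.range b) = ⊤ := by
        apply LinearIndependent.span_eq_top_of_card_eq_finrank' hon.linearIndependent
        simp [hrank]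
      have : Set.Iic (Fin.last n) = Set.univ := by
        ext x; simp [Fin.le_last]
      rw [this, Set.image_univ, hspan]
      trivial
    · intro j
      have hstep := hb'flag j
      have hmap : f (b j.castSucc) = (fK (b' j) : E) := by
        rw [hbcs]; rfl
      rw [hmap]
      have : (fK (b' j) : E) ∈ Submodule.map K.subtype (Submodule.span ℂ (b' '' Set.Iic j)) :=
        Submodule.mem_map_of_mem hstep
      rw [Submodule.map_span] at this
      refine Submodule.span_mono ?_ this
      rintro x ⟨y, ⟨k, hk, rfl⟩, rfl⟩
      exact ⟨k.castSucc, by simpa [Fin.castSucc_le_castSucc_iff] using hk, hbcs k⟩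

variable {N : ℕ}

-- entries of Uᴴ * M * U as inner products
lemma conj_entry_eq_inner (U M : Matrix (Fin N) (Fin N) ℂ)
    (b : Fin N → EuclideanSpace ℂ (Fin N)) (hb : ∀ k i, U k i = b i k) (p q : Fin N) :
    (Uᴴ * M * U) p q = inner ℂ (b p) (Matrix.toEuclideanLin M (b q)) := by
  simp only [Matrix.mul_apply, Matrix.conjTranspose_apply, PiLp.inner_apply,
    RCLike.inner_apply', Matrix.toEuclideanLin_apply, WithLp.ofLp_toLp,
    Matrix.mulVec, dotProduct,
    Finset.sum_mul, Finset.mul_sum]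
  rw [Finset.sum_comm]
  refine Finset.sum_congr rfl fun k _ => Finset.sum_congr rfl fun l _ => ?_
  rw [hb k p, hb l q]
  show star (b p k) * M k l * b q l = (starRingEnd ℂ) (b p k) * (M k l * b q l)
  rw [mul_assoc]
  rfl

lemma pow_blockTriangular {n : ℕ} (T : Matrix (Fin n) (Fin n) ℂ) (hT : T.BlockTriangular id)
    (k : ℕ) : (T ^ k).BlockTriangular id := by
  induction k with
  | zero => rw [pow_zero]; exact Matrix.blockTriangular_one
  | succ k ihk => rw [pow_succ]; exact ihk.mul hT

lemma diag_pow_blockTriangular {n : ℕ} (T : Matrix (Fin n) (Fin n) ℂ)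
    (hT : T.BlockTriangular id) (k : ℕ) (i : Fin n) : (T ^ k) i i = (T i i) ^ k := by
  induction k with
  | zero => simp
  | succ k ihk =>
    rw [pow_succ, Matrix.mul_apply, Finset.sum_eq_single i]
    · rw [ihk, pow_succ]
    · intro j _ hj
      rcases lt_or_gt_of_ne hj with h | h
      · rw [pow_blockTriangular T hT k (show id j < id i from h), zero_mul]
      · rw [hT (show id i < id j from h), mul_zero]
    · intro h; exact absurd (Finset.mem_univ i) h

lemma trace_exp_blockTriangular {n : ℕ} (T : Matrix (Fin n) (Fin n) ℂ)
    (hT : T.BlockTriangular id) :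
    Matrix.trace (NormedSpace.exp T) = ∑ i, Complex.exp (T i i) := by
  have hsum : Summable (fun k : ℕ => (k ! : ℂ)⁻¹ • T ^ k) :=
    NormedSpace.expSeries_summable' (𝕂 := ℂ) T
  have hmap : Matrix.trace (∑' k : ℕ, (k ! : ℂ)⁻¹ • T ^ k)
      = ∑' k : ℕ, Matrix.trace ((k ! : ℂ)⁻¹ • T ^ k) := by
    have := (LinearMap.toContinuousLinearMap
      (Matrix.traceLinearMap (Fin n) ℂ ℂ)).map_tsum (f := fun k : ℕ => (k ! : ℂ)⁻¹ • T ^ k) hsum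
    simpa using this
  calc Matrix.trace (NormedSpace.exp T)
      = ∑' k : ℕ, Matrix.trace ((k ! : ℂ)⁻¹ • T ^ k) := by
        rw [NormedSpace.exp_eq_tsum (𝕂 := ℂ)]; exact hmap
    _ = ∑' k : ℕ, ∑ i, (k ! : ℂ)⁻¹ * (T i i) ^ k := by
        congr 1; funext k
        rw [Matrix.trace_smul, Matrix.trace, Finset.smul_sum]
        congr 1; funext i
        rw [Matrix.diag_apply, diag_pow_blockTriangular T hT k i, smul_eq_mul]
    _ = ∑ i, ∑' k : ℕ, (k ! : ℂ)⁻¹ * (T i i) ^ k := by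
        refine Summable.tsum_finsetSum ?_
        intro i _
        simpa [smul_eq_mul] using NormedSpace.expSeries_summable' (𝕂 := ℂ) (T i i)
    _ = ∑ i, Complex.exp (T i i) := by
        refine Finset.sum_congr rfl fun i _ => ?_
        rw [Complex.exp_eq_exp_ℂ, NormedSpace.exp_eq_tsum (𝕂 := ℂ)]
        simp [smul_eq_mul]

/-- Trace bound for a perturbed Hermitian matrix: for `H` Hermitian, `L` arbitrary and
`β ≥ 0`, `|Tr(exp(-β(H+L)))| ≤ e^{β‖L‖} Tr(exp(-βH))`, where `‖L‖` is the operator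
norm induced by the Euclidean norm. -/
theorem stmt_9 (N : ℕ) (H L : Matrix (Fin N) (Fin N) ℂ) (hH : H.IsHermitian)
    (β : ℝ) (hβ : 0 ≤ β) :
    ‖Matrix.trace (NormedSpace.exp ((-(β : ℂ)) • (H + L)))‖ ≤
      Real.exp (β * ‖L‖) * (Matrix.trace (NormedSpace.exp ((-(β : ℂ)) • H))).re := by
  classical
  set A : Matrix (Fin N) (Fin N) ℂ := (-(β : ℂ)) • (H + L) with hA
  obtain ⟨b, hon, hflag⟩ := schur_flag N (EuclideanSpace ℂ (Fin N)) inferInstance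
    finrank_euclideanSpace_fin (Matrix.toEuclideanLin A)
  set U : Matrix (Fin N) (Fin N) ℂ := Matrix.of fun k i => b i k with hU
  have hb : ∀ k i, U k i = b i k := fun _ _ => rfl
  have hinner : ∀ i j, (inner ℂ (b i) (b j) : ℂ) = if i = j then 1 else 0 :=
    orthonormal_iff_ite.mp hon
  have hnorm1 : ∀ i, ‖b i‖ = 1 := hon.1
  have hUU : Uᴴ * U = 1 := by
    ext i j
    rw [Matrix.mul_apply, Matrix.one_apply]
    have h := hinner i j
    rw [PiLp.inner_apply] at h
    simp only [RCLike.inner_apply'] at h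
    simpa [Matrix.conjTranspose_apply, hb] using h
  have hUUc : U * Uᴴ = 1 := mul_eq_one_comm.mp hUU
  set T : Matrix (Fin N) (Fin N) ℂ := Uᴴ * A * U with hT
  have hTtri : T.BlockTriangular id := by
    intro p q hpq
    rw [hT, conj_entry_eq_inner U A b hb p q]
    have hmem : Matrix.toEuclideanLin A (b q) ∈ (ℂ ∙ (b p))ᗮ := by
      refine Submodule.span_le.mpr ?_ (hflag q)
      rintro x ⟨k, hk, rfl⟩
      rw [SetLike.mem_coe, Submodule.mem_orthogonal_singleton_iff_inner_right]
      rw [hinner p k, if_neg]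
      intro hpk
      rw [← hpk] at hk
      exact absurd hk (not_le.mpr hpq)
    exact Submodule.mem_orthogonal_singleton_iff_inner_right.mp hmem
  have hAT : A = U * T * Uᴴ := by
    calc A = 1 * A * 1 := by rw [Matrix.one_mul, Matrix.mul_one]
    _ = (U * Uᴴ) * A * (U * Uᴴ) := by rw [hUUc]
    _ = U * (Uᴴ * A * U) * Uᴴ := by simp only [Matrix.mul_assoc]
  have htr : Matrix.trace (NormedSpace.exp A) = ∑ i, Complex.exp (T i i) := by
    set 𝒰 : (Matrix (Fin N) (Fin N) ℂ)ˣ := ⟨U, Uᴴ, hUUc, hUU⟩ with h𝒰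
    have h1 : A = (𝒰 : Matrix (Fin N) (Fin N) ℂ) * T *
        ((𝒰⁻¹ : (Matrix (Fin N) (Fin N) ℂ)ˣ) : Matrix (Fin N) (Fin N) ℂ) := hAT
    rw [h1, Matrix.exp_units_conj 𝒰 T]
    show Matrix.trace (U * NormedSpace.exp T * Uᴴ) = _
    rw [Matrix.trace_mul_cycle, hUU, Matrix.one_mul]
    exact trace_exp_blockTriangular T hTtri
  -- spectral data for H
  set W : Matrix (Fin N) (Fin N) ℂ := (Matrix.IsHermitian.eigenvectorUnitary hH :
    Matrix (Fin N) (Fin N) ℂ) with hWdef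
  set lam : Fin N → ℝ := hH.eigenvalues with hlam
  set D : Matrix (Fin N) (Fin N) ℂ := Matrix.diagonal (fun j => (lam j : ℂ)) with hD
  have hspec : H = W * D * Wᴴ := by
    have := hH.spectral_theorem
    rw [Unitary.conjStarAlgAut_apply] at this
    rw [← Matrix.star_eq_conjTranspose]
    exact this
  have hWW : Wᴴ * W = 1 := by
    rw [← Matrix.star_eq_conjTranspose]
    exact (Unitary.mem_iff.mp (Matrix.IsHermitian.eigenvectorUnitary hH).2).1
  have hWWc : W * Wᴴ = 1 := by
    rw [← Matrix.star_eq_conjTranspose]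
    exact (Unitary.mem_iff.mp (Matrix.IsHermitian.eigenvectorUnitary hH).2).2
  set V : Matrix (Fin N) (Fin N) ℂ := Wᴴ * U with hV
  set pm : Fin N → Fin N → ℝ := fun i j => Complex.normSq (V j i) with hpm
  have hpm_nonneg : ∀ i j, 0 ≤ pm i j := fun i j => Complex.normSq_nonneg _
  have hVV : Vᴴ * V = 1 := by
    rw [hV, Matrix.conjTranspose_mul, Matrix.conjTranspose_conjTranspose,
      Matrix.mul_assoc, ← Matrix.mul_assoc W, hWWc, Matrix.one_mul, hUU]
  have hVVc : V * Vᴴ = 1 := mul_eq_one_comm.mp hVV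
  have hprow : ∀ i, ∑ j, pm i j = 1 := by
    intro i
    have h := congrFun (congrFun (congrArg (fun M => (M : Matrix (Fin N) (Fin N) ℂ)) hVV) i) i
    simp only [Matrix.mul_apply, Matrix.conjTranspose_apply, Matrix.one_apply_eq] at h
    have h2 : ∀ j, (star (V j i) : ℂ) * V j i = ((pm i j : ℝ) : ℂ) := by
      intro j
      show star (V j i) * V j i = ((Complex.normSq (V j i) : ℝ) : ℂ)
      rw [Complex.star_def, ← Complex.normSq_eq_conj_mul_self]
    rw [Finset.sum_congr rfl fun j _ => h2 j] at h
    exact_mod_cast (by exact_mod_cast h : ((∑ j, pm i j : ℝ) : ℂ) = ((1 : ℝ) : ℂ))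
  have hpcol : ∀ j, ∑ i, pm i j = 1 := by
    intro j
    have h := congrFun (congrFun (congrArg (fun M => (M : Matrix (Fin N) (Fin N) ℂ)) hVVc) j) j
    simp only [Matrix.mul_apply, Matrix.conjTranspose_apply, Matrix.one_apply_eq] at h
    have h2 : ∀ i, (V j i : ℂ) * star (V j i) = ((pm i j : ℝ) : ℂ) := by
      intro i
      show V j i * star (V j i) = ((Complex.normSq (V j i) : ℝ) : ℂ)
      rw [Complex.star_def, Complex.mul_conj]
    rw [Finset.sum_congr rfl fun i _ => h2 i] at h
    exact_mod_cast (by exact_mod_cast h : ((∑ i, pm i j : ℝ) : ℂ) = ((1 : ℝ) : ℂ))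
  have hUHU : ∀ i, (Uᴴ * H * U) i i = ((∑ j, pm i j * lam j : ℝ) : ℂ) := by
    intro i
    have hfact : Uᴴ * H * U = Vᴴ * D * V := by
      rw [hspec, hV, Matrix.conjTranspose_mul, Matrix.conjTranspose_conjTranspose]
      simp only [Matrix.mul_assoc]
    rw [hfact, Matrix.mul_apply]
    push_cast
    refine Finset.sum_congr rfl fun j _ => ?_
    have hent : (Vᴴ * D) i j = star (V j i) * (lam j : ℂ) := by
      rw [Matrix.mul_apply, Finset.sum_eq_single j]
      · rw [hD, Matrix.diagonal_apply_eq, Matrix.conjTranspose_apply]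
      · intro k _ hk
        rw [hD, Matrix.diagonal_apply_ne _ hk, mul_zero]
      · intro hj; exact absurd (Finset.mem_univ j) hj
    rw [hent]
    show star (V j i) * (lam j : ℂ) * V j i = ((Complex.normSq (V j i) : ℝ) : ℂ) * (lam j : ℂ)
    rw [Complex.star_def, mul_comm ((starRingEnd ℂ) (V j i)) ((lam j : ℂ)), mul_assoc,
      ← Complex.normSq_eq_conj_mul_self, mul_comm]
  have hLbound : ∀ i, |((Uᴴ * L * U) i i).re| ≤ ‖L‖ := by
    intro i
    have he : (Uᴴ * L * U) i i = inner ℂ (b i) (Matrix.toEuclideanLin L (b i)) :=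
      conj_entry_eq_inner U L b hb i i
    have h1 : ‖(Uᴴ * L * U) i i‖ ≤ ‖L‖ := by
      rw [he]
      calc ‖(inner ℂ (b i) (Matrix.toEuclideanLin L (b i)) : ℂ)‖
          ≤ ‖b i‖ * ‖Matrix.toEuclideanLin L (b i)‖ := norm_inner_le_norm _ _
        _ ≤ ‖b i‖ * (‖L‖ * ‖b i‖) := by
            refine mul_le_mul_of_nonneg_left ?_ (norm_nonneg _)
            exact Matrix.l2_opNorm_mulVec L (b i)
        _ = ‖L‖ := by rw [hnorm1 i]; ring
    exact le_trans (Complex.abs_re_le_norm _) h1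
  have hTdiag : ∀ i, T i i = (-(β : ℂ)) * ((Uᴴ * H * U) i i + (Uᴴ * L * U) i i) := by
    intro i
    have hTeq : T = (-(β : ℂ)) • (Uᴴ * H * U + Uᴴ * L * U) := by
      rw [hT, hA, Matrix.mul_smul, Matrix.smul_mul, Matrix.mul_add, Matrix.add_mul]
    rw [hTeq]
    simp [Matrix.add_apply, smul_eq_mul]
  have hTre : ∀ i, (T i i).re ≤ β * ‖L‖ + ∑ j, pm i j * (-β * lam j) := by
    intro i
    rw [hTdiag i]
    have hre : ((-(β : ℂ)) * ((Uᴴ * H * U) i i + (Uᴴ * L * U) i i)).re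
        = -β * (((Uᴴ * H * U) i i).re + ((Uᴴ * L * U) i i).re) := by
      have : (-(β : ℂ)) = ((-β : ℝ) : ℂ) := by push_cast; ring
      rw [this, Complex.re_ofReal_mul, Complex.add_re]
    rw [hre, hUHU i, Complex.ofReal_re]
    have h2 : -β * (∑ j, pm i j * lam j) = ∑ j, pm i j * (-β * lam j) := by
      rw [Finset.mul_sum]
      exact Finset.sum_congr rfl fun j _ => by ring
    have hx := abs_le.mp (hLbound i)
    nlinarith [hx.1, hx.2]
  have hJensen : ∀ i, Real.exp (∑ j, pm i j * (-β * lam j))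
      ≤ ∑ j, pm i j * Real.exp (-β * lam j) := by
    intro i
    have := convexOn_exp.map_sum_le (t := Finset.univ) (w := pm i)
      (p := fun j => -β * lam j) (fun j _ => hpm_nonneg i j) (hprow i)
      (fun j _ => Set.mem_univ _)
    simpa [smul_eq_mul] using this
  have hrhs : (Matrix.trace (NormedSpace.exp ((-(β : ℂ)) • H))).re
      = ∑ j, Real.exp (-β * lam j) := by
    have hsm : (-(β : ℂ)) • H
        = W * Matrix.diagonal (fun j => ((-β * lam j : ℝ) : ℂ)) * Wᴴ := by
      rw [hspec, ← Matrix.smul_mul, ← Matrix.mul_smul, hD, ← Matrix.diagonal_smul]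
      have hfun : (-(β : ℂ)) • (fun j => ((lam j : ℝ) : ℂ)) = fun j => ((-β * lam j : ℝ) : ℂ) := by
        funext j
        simp only [Pi.smul_apply, smul_eq_mul]
        push_cast
        ring
      rw [hfun]
    set 𝒲 : (Matrix (Fin N) (Fin N) ℂ)ˣ := ⟨W, Wᴴ, hWWc, hWW⟩ with h𝒲
    have h1 : (-(β : ℂ)) • H = (𝒲 : Matrix (Fin N) (Fin N) ℂ)
        * Matrix.diagonal (fun j => ((-β * lam j : ℝ) : ℂ))
        * ((𝒲⁻¹ : (Matrix (Fin N) (Fin N) ℂ)ˣ) : Matrix (Fin N) (Fin N) ℂ) := hsm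
    rw [h1, Matrix.exp_units_conj 𝒲 _]
    show (Matrix.trace (W * NormedSpace.exp _ * Wᴴ)).re = _
    rw [Matrix.trace_mul_cycle, hWW, Matrix.one_mul]
    rw [trace_exp_blockTriangular _ (Matrix.blockTriangular_diagonal _)]
    rw [Complex.re_sum]
    refine Finset.sum_congr rfl fun j _ => ?_
    rw [Matrix.diagonal_apply_eq, Complex.exp_ofReal_re]
  rw [htr, hrhs]
  calc ‖∑ i, Complex.exp (T i i)‖
      ≤ ∑ i, ‖Complex.exp (T i i)‖ := norm_sum_le _ _
    _ = ∑ i, Real.exp ((T i i).re) := by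
        refine Finset.sum_congr rfl fun i _ => ?_
        rw [Complex.norm_exp]
    _ ≤ ∑ i, Real.exp (β * ‖L‖ + ∑ j, pm i j * (-β * lam j)) :=
        Finset.sum_le_sum fun i _ => Real.exp_le_exp.mpr (hTre i)
    _ = ∑ i, Real.exp (β * ‖L‖) * Real.exp (∑ j, pm i j * (-β * lam j)) := by
        refine Finset.sum_congr rfl fun i _ => ?_
        rw [Real.exp_add]
    _ ≤ ∑ i, Real.exp (β * ‖L‖) * (∑ j, pm i j * Real.exp (-β * lam j)) :=
        Finset.sum_le_sum fun i _ =>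
          mul_le_mul_of_nonneg_left (hJensen i) (Real.exp_nonneg _)
    _ = Real.exp (β * ‖L‖) * ∑ j, (∑ i, pm i j) * Real.exp (-β * lam j) := by
        rw [← Finset.mul_sum]
        congr 1
        rw [Finset.sum_comm]
        exact Finset.sum_congr rfl fun j _ => (Finset.sum_mul _ _ _).symm
    _ = Real.exp (β * ‖L‖) * ∑ j, Real.exp (-β * lam j) := by
        congr 1
        exact Finset.sum_congr rfl fun j _ => by rw [hpcol j, one_mul]
end

section
/- Let N ≥ 1, let U be an N×N unitary complex matrix, let d ∈ ℕ, let θ, φ ∈ ℝ^{d+1} and λ ∈ ℝ. Define the 2N×2N matrices A = |0⟩⟨0| ⊗ U + |1⟩⟨1| ⊗ I_N (block-diagonal with blocks U and I_N) and, for any (θ', φ', λ'), R(θ',φ',λ') = [[e^{i(λ'+φ')}cos θ', e^{iφ'} sin θ'], [e^{iλ'} sin θ', −cos θ']] ⊗ I_N. Then there exist polynomials P, Q ∈ ℂ[x] with deg P ≤ d and deg Q ≤ d satisfying |P(x)|² + |Q(x)|² = 1 for every x ∈ ℂ with |x| = 1, such that the top-left N×N block of (∏_{j=1}^{d} R(θ_j,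 φ_j, 0)·A) · R(θ_0, φ_0, λ) equals P(U) and the bottom-left N×N block equals Q(U). -/
open Matrix Kronecker

/-- The single-qubit rotation `R(θ,φ,λ)` tensored with the `N×N` identity:
`R(θ,φ,λ) = [[e^{i(λ+φ)}cos θ, e^{iφ} sin θ], [e^{iλ} sin θ, -cos θ]] ⊗ I_N`. -/
noncomputable def gqspR (N : ℕ) (θ φ lam : ℝ) : Matrix (Fin 2 × Fin N) (Fin 2 × Fin N) ℂ :=
  (!![Complex.exp (Complex.I * ((lam : ℂ) + (φ : ℂ))) * (Real.cos θ : ℂ),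
      Complex.exp (Complex.I * (φ : ℂ)) * (Real.sin θ : ℂ);
      Complex.exp (Complex.I * (lam : ℂ)) * (Real.sin θ : ℂ),
      -(Real.cos θ : ℂ)] : Matrix (Fin 2) (Fin 2) ℂ) ⊗ₖ (1 : Matrix (Fin N) (Fin N) ℂ)

/-- The anti-controlled evolution operator `A = |0⟩⟨0| ⊗ U + |1⟩⟨1| ⊗ I_N`. -/
noncomputable def gqspA (N : ℕ) (U : Matrix (Fin N) (Fin N) ℂ) :
    Matrix (Fin 2 × Fin N) (Fin 2 × Fin N) ℂ :=
  (!![1, 0; 0, 0] : Matrix (Fin 2) (Fin 2) ℂ) ⊗ₖ U +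
    (!![0, 0; 0, 1] : Matrix (Fin 2) (Fin 2) ℂ) ⊗ₖ (1 : Matrix (Fin N) (Fin N) ℂ)

/-- The interleaved GQSP circuit `(∏_{j=1}^d R(θ_j,φ_j,0) A) R(θ_0,φ_0,λ)`
(the factor with the largest index `j = d` acting first on the right of the
`j = 1, …, d` factors, and `R(θ_0,φ_0,λ)` acting first of all). -/
noncomputable def gqspCircuit (N d : ℕ) (U : Matrix (Fin N) (Fin N) ℂ)
    (θ φ : Fin (d + 1) → ℝ) (lam : ℝ) : Matrix (Fin 2 × Fin N) (Fin 2 × Fin N) ℂ :=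
  (List.ofFn fun j : Fin d => gqspR N (θ j.succ) (φ j.succ) 0 * gqspA N U).prod *
    gqspR N (θ 0) (φ 0) lam

/-- The top-left `N×N` block of a `2N×2N` block matrix. -/
def block00 (N : ℕ) (W : Matrix (Fin 2 × Fin N) (Fin 2 × Fin N) ℂ) :
    Matrix (Fin N) (Fin N) ℂ :=
  Matrix.of fun i j => W (0, i) (0, j)

/-- The bottom-left `N×N` block of a `2N×2N` block matrix. -/
def block10 (N : ℕ) (W : Matrix (Fin 2 × Fin N) (Fin 2 × Fin N) ℂ) :
    Matrix (Fin N) (Fin N) ℂ :=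
  Matrix.of fun i j => W (1, i) (0, j)

lemma block00_R_mul (N : ℕ) (t p l : ℝ) (W : Matrix (Fin 2 × Fin N) (Fin 2 × Fin N) ℂ) :
    block00 N (gqspR N t p l * W) =
      (Complex.exp (Complex.I * ((l:ℂ) + p)) * (Real.cos t : ℂ)) • block00 N W +
      (Complex.exp (Complex.I * (p:ℂ)) * (Real.sin t : ℂ)) • block10 N W := by
  ext i j
  simp [block00, block10, gqspR, Matrix.mul_apply, Fintype.sum_prod_type, Fin.sum_univ_two,
    Matrix.one_apply, Finset.mul_sum, mul_ite, Finset.sum_ite_eq, Finset.sum_ite_eq']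

lemma block10_R_mul (N : ℕ) (t p l : ℝ) (W : Matrix (Fin 2 × Fin N) (Fin 2 × Fin N) ℂ) :
    block10 N (gqspR N t p l * W) =
      (Complex.exp (Complex.I * (l:ℂ)) * (Real.sin t : ℂ)) • block00 N W -
      (Real.cos t : ℂ) • block10 N W := by
  ext i j
  simp [block00, block10, gqspR, Matrix.mul_apply, Fintype.sum_prod_type, Fin.sum_univ_two,
    Matrix.one_apply, Finset.mul_sum, mul_ite, Finset.sum_ite_eq, Finset.sum_ite_eq',
    sub_eq_add_neg]

lemma block00_A_mul (N : ℕ) (U : Matrix (Fin N) (Fin N) ℂ)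
    (W : Matrix (Fin 2 × Fin N) (Fin 2 × Fin N) ℂ) :
    block00 N (gqspA N U * W) = U * block00 N W := by
  ext i j
  simp [block00, gqspA, Matrix.mul_apply, Fintype.sum_prod_type, Fin.sum_univ_two,
    Matrix.add_apply, Matrix.one_apply, add_mul, mul_ite, Finset.sum_ite_eq, Finset.sum_ite_eq']

lemma block10_A_mul (N : ℕ) (U : Matrix (Fin N) (Fin N) ℂ)
    (W : Matrix (Fin 2 × Fin N) (Fin 2 × Fin N) ℂ) :
    block10 N (gqspA N U * W) = block10 N W := by
  ext i j
  simp [block10, gqspA, Matrix.mul_apply, Fintype.sum_prod_type, Fin.sum_univ_two,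
    Matrix.add_apply, Matrix.one_apply, add_mul, mul_ite, Finset.sum_ite_eq, Finset.sum_ite_eq']

lemma block00_R (N : ℕ) (t p l : ℝ) :
    block00 N (gqspR N t p l) =
      (Complex.exp (Complex.I * ((l:ℂ) + p)) * (Real.cos t : ℂ)) •
        (1 : Matrix (Fin N) (Fin N) ℂ) := by
  ext i j
  simp [block00, gqspR, Matrix.one_apply]

lemma block10_R (N : ℕ) (t p l : ℝ) :
    block10 N (gqspR N t p l) =
      (Complex.exp (Complex.I * (l:ℂ)) * (Real.sin t : ℂ)) •
        (1 : Matrix (Fin N) (Fin N) ℂ) := by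
  ext i j
  simp [block10, gqspR, Matrix.one_apply]

lemma gqspCircuit_succ (N d : ℕ) (U : Matrix (Fin N) (Fin N) ℂ)
    (θ φ : Fin (d + 2) → ℝ) (lam : ℝ) :
    gqspCircuit N (d+1) U θ φ lam =
      gqspR N (θ 1) (φ 1) 0 * gqspA N U *
        gqspCircuit N d U (Fin.cases (θ 0) fun i => θ i.succ.succ)
          (Fin.cases (φ 0) fun i => φ i.succ.succ) lam := by
  unfold gqspCircuit
  rw [List.ofFn_succ, List.prod_cons]
  simp [Fin.cases_zero, Fin.cases_succ, Fin.succ_zero_eq_one, mul_assoc]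

lemma gqspCircuit_zero (N : ℕ) (U : Matrix (Fin N) (Fin N) ℂ)
    (θ φ : Fin 1 → ℝ) (lam : ℝ) :
    gqspCircuit N 0 U θ φ lam = gqspR N (θ 0) (φ 0) lam := by
  simp [gqspCircuit]

lemma norm_step (c s : ℝ) (h : c^2 + s^2 = 1) (e a b : ℂ) (he : Complex.normSq e = 1) :
    Complex.normSq (e * ((c:ℂ) * a + (s:ℂ) * b)) + Complex.normSq ((s:ℂ) * a - (c:ℂ) * b) =
      Complex.normSq a + Complex.normSq b := by
  rw [Complex.normSq_mul, he, one_mul]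
  simp only [Complex.normSq_apply, Complex.add_re, Complex.add_im, Complex.sub_re,
    Complex.sub_im, Complex.mul_re, Complex.mul_im, Complex.ofReal_re, Complex.ofReal_im]
  ring_nf
  nlinarith [h, sq_nonneg a.re, sq_nonneg a.im]

lemma gqsp_key (N : ℕ) (U : Matrix (Fin N) (Fin N) ℂ) (d : ℕ) :
    ∀ (θ φ : Fin (d + 1) → ℝ) (lam : ℝ),
      ∃ P Q : Polynomial ℂ, P.natDegree ≤ d ∧ Q.natDegree ≤ d ∧
        (∀ x : ℂ, ‖x‖ = 1 →
          ‖P.eval x‖ ^ 2 + ‖Q.eval x‖ ^ 2 = 1) ∧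
        block00 N (gqspCircuit N d U θ φ lam) = Polynomial.aeval U P ∧
        block10 N (gqspCircuit N d U θ φ lam) = Polynomial.aeval U Q := by
  induction d with
  | zero =>
    intro θ φ lam
    refine ⟨Polynomial.C (Complex.exp (Complex.I * ((lam:ℂ) + φ 0)) * (Real.cos (θ 0) : ℂ)),
            Polynomial.C (Complex.exp (Complex.I * (lam:ℂ)) * (Real.sin (θ 0) : ℂ)),
            le_of_eq (Polynomial.natDegree_C _), le_of_eq (Polynomial.natDegree_C _),
            ?_, ?_, ?_⟩
    · intro x hx
      simp only [Polynomial.eval_mul, Polynomial.eval_C, _root_.map_mul, norm_mul, Complex.norm_exp, Complex.norm_real, Real.norm_eq_abs]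
      have h1 : (Complex.I * ((lam:ℂ) + φ 0)).re = 0 := by simp
      have h2 : (Complex.I * (lam:ℂ)).re = 0 := by simp
      rw [h1, h2, Real.exp_zero, one_mul, one_mul, sq_abs, sq_abs, Real.cos_sq_add_sin_sq]
    · rw [gqspCircuit_zero, block00_R]
      rw [Polynomial.aeval_C, Algebra.algebraMap_eq_smul_one]
    · rw [gqspCircuit_zero, block10_R]
      rw [Polynomial.aeval_C, Algebra.algebraMap_eq_smul_one]
  | succ d ih =>
    intro θ φ lam
    obtain ⟨P, Q, hPdeg, hQdeg, hnorm, h00, h10⟩ :=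
      ih (Fin.cases (θ 0) fun i => θ i.succ.succ) (Fin.cases (φ 0) fun i => φ i.succ.succ) lam
    set c : ℝ := Real.cos (θ 1) with hc
    set s : ℝ := Real.sin (θ 1) with hs
    set e : ℂ := Complex.exp (Complex.I * (φ 1 : ℂ)) with he'
    have he : Complex.normSq e = 1 := by
      rw [← Complex.sq_norm, he', Complex.norm_exp]
      norm_num
    refine ⟨Polynomial.C e * (Polynomial.C (c:ℂ) * (Polynomial.X * P) +
              Polynomial.C (s:ℂ) * Q),
            Polynomial.C (s:ℂ) * (Polynomial.X * P) - Polynomial.C (c:ℂ) * Q,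
            ?_, ?_, ?_, ?_, ?_⟩
    · refine le_trans (Polynomial.natDegree_C_mul_le _ _) ?_
      refine le_trans (Polynomial.natDegree_add_le _ _) ?_
      refine max_le ?_ ?_
      · refine le_trans (Polynomial.natDegree_C_mul_le _ _) ?_
        refine le_trans (Polynomial.natDegree_mul_le) ?_
        simp only [Polynomial.natDegree_X]
        omega
      · exact le_trans (Polynomial.natDegree_C_mul_le _ _) (by omega)
    · refine le_trans (Polynomial.natDegree_sub_le _ _) ?_
      refine max_le ?_ ?_
      · refine le_trans (Polynomial.natDegree_C_mul_le _ _) ?_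
        refine le_trans (Polynomial.natDegree_mul_le) ?_
        simp only [Polynomial.natDegree_X]
        omega
      · exact le_trans (Polynomial.natDegree_C_mul_le _ _) (by omega)
    · intro x hx
      have hx2 : Complex.normSq x = 1 := by rw [← Complex.sq_norm, hx]; norm_num
      have h1 := hnorm x hx
      simp only [Polynomial.eval_mul, Polynomial.eval_add, Polynomial.eval_sub,
        Polynomial.eval_C, Polynomial.eval_X]
      rw [Complex.sq_norm, Complex.sq_norm,
        norm_step c s (by rw [hc, hs]; exact Real.cos_sq_add_sin_sq (θ 1)) e _ _ he,
        Complex.normSq_mul, hx2, one_mul, ← Complex.sq_norm, ← Complex.sq_norm]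
      exact h1
    · rw [gqspCircuit_succ, mul_assoc, block00_R_mul, block00_A_mul, block10_A_mul, h00, h10]
      simp only [_root_.map_mul, _root_.map_add, Polynomial.aeval_C, Polynomial.aeval_X,
        Algebra.algebraMap_eq_smul_one, Complex.ofReal_zero, zero_add,
        smul_mul_assoc, one_mul, mul_add, smul_add, smul_smul]
      rfl
    · rw [gqspCircuit_succ, mul_assoc, block10_R_mul, block00_A_mul, block10_A_mul, h00, h10]
      simp only [_root_.map_mul, _root_.map_add, _root_.map_sub, Polynomial.aeval_C, Polynomial.aeval_X,
        Algebra.algebraMap_eq_smul_one, Complex.ofReal_zero, Complex.ofReal_one,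
        mul_zero, Complex.exp_zero, one_mul,
        smul_mul_assoc, mul_add, smul_add, smul_smul]
      rfl

/-- Generalized Quantum Signal Processing, forward direction: the GQSP circuit built
from any angles implements polynomials `P(U)` and `Q(U)` of degree at most `d` with
`|P(x)|² + |Q(x)|² = 1` on the unit circle. -/
theorem stmt_11 (N : ℕ) (hN : 1 ≤ N) (U : Matrix (Fin N) (Fin N) ℂ)
    (hU : U ∈ Matrix.unitaryGroup (Fin N) ℂ) (d : ℕ)
    (θ φ : Fin (d + 1) → ℝ) (lam : ℝ) :
    ∃ P Q : Polynomial ℂ, P.natDegree ≤ d ∧ Q.natDegree ≤ d ∧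
      (∀ x : ℂ, ‖x‖ = 1 →
        ‖P.eval x‖ ^ 2 + ‖Q.eval x‖ ^ 2 = 1) ∧
      block00 N (gqspCircuit N d U θ φ lam) = Polynomial.aeval U P ∧
      block10 N (gqspCircuit N d U θ φ lam) = Polynomial.aeval U Q := by
  exact gqsp_key N U d θ φ lam
end

section
/- Let P ∈ ℂ[x] be a polynomial of degree d such that |P(x)|² ≤ 1 for every x ∈ ℂ with |x| = 1. Then there exists a polynomial Q ∈ ℂ[x] with deg Q ≤ d such that |P(x)|² + |Q(x)|² = 1 for every x ∈ ℂ with |x| = 1. -/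
open Polynomial Complex
noncomputable section

lemma eval_reflect (N : ℕ) (p : ℂ[X]) (hp : p.natDegree ≤ N) (x : ℂ) (hx : x ≠ 0) :
    (p.reflect N).eval x = x ^ N * p.eval x⁻¹ := by
  letI : Invertible (x⁻¹) := invertibleOfNonzero (inv_ne_zero hx)
  have h := eval₂_reflect_mul_pow (RingHom.id ℂ) x⁻¹ N p hp
  rw [invOf_eq_inv, inv_inv] at h
  have e1 : eval₂ (RingHom.id ℂ) x (p.reflect N) = (p.reflect N).eval x := rfl
  have e2 : eval₂ (RingHom.id ℂ) x⁻¹ p = p.eval x⁻¹ := rfl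
  rw [e1, e2] at h
  have hxN : (x⁻¹ : ℂ) ^ N * x ^ N = 1 := by
    rw [← mul_pow, inv_mul_cancel₀ hx, one_pow]
  calc (p.reflect N).eval x = (p.reflect N).eval x * ((x⁻¹:ℂ)^N * x^N) := by rw [hxN, mul_one]
    _ = ((p.reflect N).eval x * x⁻¹^N) * x^N := by ring
    _ = x ^ N * p.eval x⁻¹ := by rw [h]; ring

lemma eval_map_conj (p : ℂ[X]) (z : ℂ) :
    (p.map (starRingEnd ℂ)).eval ((starRingEnd ℂ) z) = (starRingEnd ℂ) (p.eval z) := by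
  rw [eval_map, eval₂_at_apply]

lemma circle_mul_conj {z : ℂ} (hz : ‖z‖ = 1) : z * (starRingEnd ℂ) z = 1 := by
  rw [Complex.mul_conj]
  norm_cast
  rw [Complex.normSq_eq_norm_sq, hz]; norm_num

lemma circle_ne_zero {z : ℂ} (hz : ‖z‖ = 1) : z ≠ 0 := by
  intro h; rw [h] at hz; simp at hz

lemma circle_inv {z : ℂ} (hz : ‖z‖ = 1) : z⁻¹ = (starRingEnd ℂ) z := by
  field_simp [circle_ne_zero hz]
  exact (circle_mul_conj hz).symm

lemma exp_I_ne_one {θ : ℝ} (h0 : θ ≠ 0) (h1 : |θ| < 2) : Complex.exp (θ * Complex.I) ≠ 1 := by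
  intro h
  rw [Complex.exp_eq_one_iff] at h
  obtain ⟨n, hn⟩ := h
  have hI : (Complex.I : ℂ) ≠ 0 := Complex.I_ne_zero
  have h2 : (θ : ℂ) = (n : ℂ) * (2 * Real.pi) := by
    have := mul_right_cancel₀ hI (by linear_combination hn : (θ:ℂ) * Complex.I = ((n:ℂ) * (2*Real.pi)) * Complex.I)
    exact this
  have h3 : θ = (n : ℝ) * (2 * Real.pi) := by exact_mod_cast h2
  rcases eq_or_ne n 0 with h | h
  · exact h0 (by simp [h] at h3; exact h3)
  · have : (1:ℝ) ≤ |(n:ℝ)| := by exact_mod_cast Int.one_le_abs h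
    have hpi : (2:ℝ) < 2 * Real.pi := by nlinarith [Real.pi_gt_three]
    have : (2:ℝ) ≤ |θ| := by
      rw [h3, abs_mul, abs_of_pos (by positivity : (0:ℝ) < 2*Real.pi)]
      nlinarith
    linarith

lemma circle_infinite : {z : ℂ | ‖z‖ = 1}.Infinite := by
  apply Set.infinite_of_injOn_mapsTo (f := fun θ : ℝ => Complex.exp (θ * Complex.I))
    (s := Set.Ioo (0:ℝ) 1)
  · intro a ha b hb hab
    by_contra hne
    have : Complex.exp ((a - b : ℝ) * Complex.I) = 1 := by
      push_cast
      rw [sub_mul, Complex.exp_sub]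
      simp only at hab
      rw [hab, div_self (Complex.exp_ne_zero _)]
    exact exp_I_ne_one (sub_ne_zero.mpr hne) (by
      rw [abs_sub_lt_iff]; constructor <;> nlinarith [ha.1, ha.2, hb.1, hb.2]) this
  · intro θ _
    simp [Complex.norm_exp_ofReal_mul_I]
  · exact Set.infinite_coe_iff.mp (Set.Ioo.infinite (by norm_num : (0:ℝ) < 1))

/-- Symmetry of polynomials that are real multiples of z^d on the circle. -/
lemma sym_of_real (d : ℕ) (A : ℂ[X]) (hdeg : A.natDegree ≤ 2 * d)
    (hA : ∀ z : ℂ, ‖z‖ = 1 → ∃ t : ℝ, A.eval z = (t : ℂ) * z ^ d) :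
    (A.map (starRingEnd ℂ)).reflect (2 * d) = A := by
  have hmapdeg : (A.map (starRingEnd ℂ)).natDegree ≤ 2 * d :=
    le_trans natDegree_map_le hdeg
  have key : ∀ z ∈ {z : ℂ | ‖z‖ = 1},
      ((A.map (starRingEnd ℂ)).reflect (2 * d) - A).eval z = 0 := by
    intro z hz
    have hz' : ‖z‖ = 1 := hz
    have hz0 := circle_ne_zero hz'
    obtain ⟨t, ht⟩ := hA z hz'
    rw [eval_sub, eval_reflect _ _ hmapdeg _ hz0, circle_inv hz', eval_map_conj, ht]
    have hcd : ((starRingEnd ℂ) z) ^ d = (z ^ d)⁻¹ := by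
      rw [← circle_inv hz', inv_pow]
    rw [map_mul, map_pow]
    simp only [Complex.conj_ofReal, hcd]
    have hzd : (z : ℂ) ^ d ≠ 0 := pow_ne_zero _ hz0
    field_simp
    ring
  have : ((A.map (starRingEnd ℂ)).reflect (2 * d) - A) = 0 := by
    apply Polynomial.eq_zero_of_infinite_isRoot
    exact circle_infinite.mono (fun z hz => key z hz)
  linear_combination (norm := ring_nf) this

lemma key_contra (d : ℕ) (A B : ℂ[X]) (r : ℂ) (hr : ‖r‖ = 1)
    (hAB : A = (X - C r) * B) (hBr : B.eval r ≠ 0)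
    (hA : ∀ z : ℂ, ‖z‖ = 1 → ∃ t : ℝ, 0 ≤ t ∧ A.eval z = (t : ℂ) * z ^ d) :
    False := by
  set z : ℝ → ℂ := fun θ => r * Complex.exp (θ * Complex.I) with hz
  have habs : ∀ θ : ℝ, ‖z θ‖ = 1 := by
    intro θ; simp [hz, map_mul, hr, Complex.norm_exp_ofReal_mul_I]
  set g : ℝ → ℂ := fun θ => A.eval (z θ) * ((starRingEnd ℂ) (z θ)) ^ d / (θ : ℂ) with hgdef
  have hg_real : ∀ θ : ℝ, ∃ t : ℝ, 0 ≤ t ∧ g θ = ((t / θ : ℝ) : ℂ) := by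
    intro θ
    obtain ⟨t, ht, htz⟩ := hA (z θ) (habs θ)
    refine ⟨t, ht, ?_⟩
    have h1 : z θ * (starRingEnd ℂ) (z θ) = 1 := circle_mul_conj (habs θ)
    have : A.eval (z θ) * ((starRingEnd ℂ) (z θ)) ^ d = (t : ℂ) := by
      rw [htz]
      calc (t : ℂ) * (z θ) ^ d * ((starRingEnd ℂ) (z θ)) ^ d
          = (t : ℂ) * (z θ * (starRingEnd ℂ) (z θ)) ^ d := by ring
        _ = (t : ℂ) := by rw [h1]; ring
    rw [hgdef]; simp only []
    rw [this]; push_cast; ring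
  -- derivative of exp(θ I) at 0
  have hder : HasDerivAt (fun θ : ℝ => Complex.exp (θ * Complex.I)) Complex.I 0 := by
    have h1 : HasDerivAt (fun θ : ℝ => (θ : ℂ) * Complex.I) Complex.I 0 := by
      simpa using ((hasDerivAt_id (0 : ℝ)).smul_const (Complex.I)).congr_deriv (by simp)
    simpa using h1.cexp
  have hslope : Filter.Tendsto (fun θ : ℝ => (Complex.exp (θ * Complex.I) - 1) / (θ : ℂ))
      (nhdsWithin 0 {(0:ℝ)}ᶜ) (nhds Complex.I) := by
    have := hasDerivAt_iff_tendsto_slope.mp hder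
    apply this.congr
    intro θ
    simp [slope, Complex.real_smul, Complex.exp_zero, div_eq_inv_mul]
  have hcont : Filter.Tendsto (fun θ : ℝ => r * B.eval (z θ) * ((starRingEnd ℂ) (z θ)) ^ d)
      (nhdsWithin 0 {(0:ℝ)}ᶜ) (nhds (r * B.eval r * ((starRingEnd ℂ) r) ^ d)) := by
    have hzc : Continuous z := by
      apply continuous_const.mul
      exact (Complex.continuous_ofReal.mul continuous_const).cexp
    have hc : Continuous (fun θ : ℝ => r * B.eval (z θ) * ((starRingEnd ℂ) (z θ)) ^ d) := by
      apply Continuous.mul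
      · exact continuous_const.mul (B.continuous.comp hzc)
      · exact (Complex.continuous_conj.comp hzc).pow d
    have h0 : z 0 = r := by simp [hz]
    have := hc.tendsto 0
    rw [h0] at this
    exact this.mono_left nhdsWithin_le_nhds
  set c : ℂ := Complex.I * (r * B.eval r * ((starRingEnd ℂ) r) ^ d) with hc
  have hg_tendsto : Filter.Tendsto g (nhdsWithin 0 {(0:ℝ)}ᶜ) (nhds c) := by
    apply Filter.Tendsto.congr' _ (hslope.mul hcont)
    filter_upwards [self_mem_nhdsWithin] with θ hθ
    have hθ0 : (θ : ℂ) ≠ 0 := by exact_mod_cast hθ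
    rw [hgdef]
    simp only []
    rw [hAB]
    rw [eval_mul, eval_sub, eval_X, eval_C]
    have : z θ - r = r * (Complex.exp (θ * Complex.I) - 1) := by rw [hz]; ring
    rw [this]
    field_simp
  have hcne : c ≠ 0 := by
    rw [hc]
    have hr0 : r ≠ 0 := circle_ne_zero hr
    have hcr : (starRingEnd ℂ) r ≠ 0 := by simpa using hr0
    exact mul_ne_zero Complex.I_ne_zero
      (mul_ne_zero (mul_ne_zero hr0 hBr) (pow_ne_zero _ hcr))
  have hKp : c ∈ {w : ℂ | w.im = 0 ∧ 0 ≤ w.re} := by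
    have hclosed : IsClosed {w : ℂ | w.im = 0 ∧ 0 ≤ w.re} :=
      (isClosed_eq Complex.continuous_im continuous_const).inter
        (isClosed_le continuous_const Complex.continuous_re)
    apply hclosed.mem_of_tendsto
      (hg_tendsto.mono_left (nhdsWithin_mono 0 (fun x (hx : x ∈ Set.Ioi (0:ℝ)) => ne_of_gt hx)))
    filter_upwards [self_mem_nhdsWithin] with θ (hθ : θ ∈ Set.Ioi (0:ℝ))
    obtain ⟨t, ht, htg⟩ := hg_real θ
    rw [htg]
    exact ⟨Complex.ofReal_im _, by rw [Complex.ofReal_re]; exact div_nonneg ht hθ.le⟩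
  have hKm : c ∈ {w : ℂ | w.im = 0 ∧ w.re ≤ 0} := by
    have hclosed : IsClosed {w : ℂ | w.im = 0 ∧ w.re ≤ 0} :=
      (isClosed_eq Complex.continuous_im continuous_const).inter
        (isClosed_le Complex.continuous_re continuous_const)
    apply hclosed.mem_of_tendsto
      (hg_tendsto.mono_left (nhdsWithin_mono 0 (fun x (hx : x ∈ Set.Iio (0:ℝ)) => ne_of_lt hx)))
    filter_upwards [self_mem_nhdsWithin] with θ (hθ : θ ∈ Set.Iio (0:ℝ))
    obtain ⟨t, ht, htg⟩ := hg_real θ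
    rw [htg]
    refine ⟨Complex.ofReal_im _, ?_⟩
    rw [Complex.ofReal_re]
    exact div_nonpos_of_nonneg_of_nonpos ht hθ.le
  apply hcne
  apply Complex.ext
  · exact le_antisymm hKm.2 hKp.2
  · exact hKp.1

lemma cond_closed (d : ℕ) (B : ℂ[X]) (r : ℂ) (hr : ‖r‖ = 1)
    (h : ∀ z : ℂ, ‖z‖ = 1 → z ≠ r → ∃ t : ℝ, 0 ≤ t ∧ B.eval z = (t : ℂ) * z ^ d) :
    ∃ t : ℝ, 0 ≤ t ∧ B.eval r = (t : ℂ) * r ^ d := by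
  set z : ℝ → ℂ := fun θ => r * Complex.exp (θ * Complex.I) with hz
  have habs : ∀ θ : ℝ, ‖z θ‖ = 1 := by
    intro θ; simp [hz, map_mul, hr, Complex.norm_exp_ofReal_mul_I]
  set f : ℝ → ℂ := fun θ => B.eval (z θ) * ((starRingEnd ℂ) (z θ)) ^ d with hf
  have hcont : Continuous f := by
    have hzc : Continuous z := continuous_const.mul
      ((Complex.continuous_ofReal.mul continuous_const).cexp)
    exact (B.continuous.comp hzc).mul ((Complex.continuous_conj.comp hzc).pow d)
  have hmem : ∀ θ ∈ Set.Ioo (0:ℝ) 1, f θ ∈ {w : ℂ | w.im = 0 ∧ 0 ≤ w.re} := by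
    intro θ hθ
    have hne : z θ ≠ r := by
      intro hzr
      have : Complex.exp (θ * Complex.I) = 1 := by
        have hr0 : r ≠ 0 := circle_ne_zero hr
        exact mul_left_cancel₀ hr0 (by rw [mul_one]; exact hzr)
      exact exp_I_ne_one (ne_of_gt hθ.1) (by rw [abs_of_pos hθ.1]; linarith [hθ.2]) this
    obtain ⟨t, ht, htz⟩ := h (z θ) (habs θ) hne
    have h1 : z θ * (starRingEnd ℂ) (z θ) = 1 := circle_mul_conj (habs θ)
    have hfv : f θ = (t : ℂ) := by
      rw [hf]; simp only []
      rw [htz]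
      calc (t : ℂ) * (z θ) ^ d * ((starRingEnd ℂ) (z θ)) ^ d
          = (t : ℂ) * (z θ * (starRingEnd ℂ) (z θ)) ^ d := by ring
        _ = (t : ℂ) := by rw [h1]; ring
    rw [hfv]
    exact ⟨Complex.ofReal_im _, by rw [Complex.ofReal_re]; exact ht⟩
  have hclosed : IsClosed {w : ℂ | w.im = 0 ∧ 0 ≤ w.re} :=
    (isClosed_eq Complex.continuous_im continuous_const).inter
      (isClosed_le continuous_const Complex.continuous_re)
  have hf0 : f 0 ∈ {w : ℂ | w.im = 0 ∧ 0 ≤ w.re} := by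
    apply hclosed.mem_of_tendsto ((hcont.tendsto 0).mono_left
      (nhdsWithin_le_nhds (s := Set.Ioi (0:ℝ))))
    filter_upwards [Ioo_mem_nhdsGT_of_mem (by norm_num : (0:ℝ) ∈ Set.Ico (0:ℝ) 1)] with θ hθ
    exact hmem θ hθ
  have hz0 : z 0 = r := by simp [hz]
  have hrr : r * (starRingEnd ℂ) r = 1 := circle_mul_conj hr
  refine ⟨(f 0).re, hf0.2, ?_⟩
  have hfr : f 0 = B.eval r * ((starRingEnd ℂ) r) ^ d := by rw [hf]; simp only []; rw [hz0]
  have hfre : (((f 0).re : ℝ) : ℂ) = f 0 := by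
    rw [Complex.ext_iff]
    exact ⟨by simp, by simp [hf0.1]⟩
  rw [hfre, hfr]
  symm
  calc B.eval r * ((starRingEnd ℂ) r) ^ d * r ^ d
      = B.eval r * (r * (starRingEnd ℂ) r) ^ d := by ring
    _ = B.eval r := by rw [hrr]; ring

lemma fejer_riesz (d : ℕ) : ∀ A : ℂ[X], A.natDegree ≤ 2 * d →
    (∀ z : ℂ, ‖z‖ = 1 → ∃ t : ℝ, 0 ≤ t ∧ A.eval z = (t : ℂ) * z ^ d) →
    ∃ Q : ℂ[X], Q.natDegree ≤ d ∧ ∀ z : ℂ, ‖z‖ = 1 →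
      A.eval z = (((‖Q.eval z‖) ^ 2 : ℝ) : ℂ) * z ^ d := by
  induction d with
  | zero =>
    intro A hdeg hA
    obtain ⟨t, ht, h1⟩ := hA 1 (by simp)
    have hAC : A = C (A.coeff 0) := eq_C_of_natDegree_le_zero (by simpa using hdeg)
    refine ⟨C ((Real.sqrt t : ℝ) : ℂ), by simp, ?_⟩
    intro z hz
    have hev : ∀ w : ℂ, A.eval w = A.coeff 0 := by
      intro w; conv_lhs => rw [hAC]
      simp
    have hc : A.coeff 0 = (t : ℂ) := by
      have := h1; rw [hev 1] at this; simpa using this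
    rw [hev z, hc]
    simp [Complex.norm_real, _root_.abs_of_nonneg (Real.sqrt_nonneg t), Real.sq_sqrt ht]
  | succ d ih =>
    intro A hdeg hA
    by_cases hA0 : A = 0
    · exact ⟨0, by simp, by intro z hz; simp [hA0]⟩
    have hsym : (A.map (starRingEnd ℂ)).reflect (2 * (d+1)) = A :=
      sym_of_real (d+1) A hdeg (fun z hz => ⟨(hA z hz).choose, (hA z hz).choose_spec.2⟩)
    by_cases h0 : A.eval 0 = 0
    · -- case root at 0
      have hc0 : A.coeff 0 = 0 := by rwa [coeff_zero_eq_eval_zero]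
      have htop : A.coeff (2 * (d+1)) = 0 := by
        conv_lhs => rw [← hsym]
        rw [coeff_reflect, revAt_le (le_refl _)]
        simp [hc0]
      have hdeg' : A.natDegree ≤ 2 * d + 1 := by
        rw [natDegree_le_iff_coeff_eq_zero]
        intro N hN
        rcases eq_or_lt_of_le (Nat.succ_le_of_lt hN) with h | h
        · rw [show N = 2 * (d+1) by omega]; exact htop
        · exact coeff_eq_zero_of_natDegree_lt (by omega)
      obtain ⟨B, hB⟩ := X_dvd_iff.mpr hc0
      have hBne : B ≠ 0 := fun h => hA0 (by rw [hB, h, mul_zero])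
      have hBdeg : B.natDegree ≤ 2 * d := by
        have := natDegree_mul (p := (X : ℂ[X])) (q := B) X_ne_zero hBne
        rw [← hB, natDegree_X] at this
        omega
      have hBcond : ∀ z : ℂ, ‖z‖ = 1 → ∃ t : ℝ, 0 ≤ t ∧ B.eval z = (t : ℂ) * z ^ d := by
        intro z hz
        obtain ⟨t, ht, htz⟩ := hA z hz
        refine ⟨t, ht, ?_⟩
        have hz0 := circle_ne_zero hz
        apply mul_left_cancel₀ hz0
        rw [hB] at htz
        rw [eval_mul, eval_X] at htz
        rw [htz]; ring
      obtain ⟨Q, hQdeg, hQ⟩ := ih B hBdeg hBcond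
      refine ⟨Q, le_trans hQdeg (by omega), ?_⟩
      intro z hz
      rw [hB, eval_mul, eval_X, hQ z hz]; ring
    · -- A(0) ≠ 0
      have hdpos : 0 < A.natDegree := by
        by_contra hcon
        push_neg at hcon
        have hAC : A = C (A.coeff 0) := eq_C_of_natDegree_le_zero (by omega)
        have hane : A.coeff 0 ≠ 0 := by
          intro h; exact h0 (by rw [hAC, h]; simp)
        obtain ⟨t1, ht1, h1⟩ := hA 1 (by simp)
        rw [hAC] at h1; simp at h1
        set z2 : ℂ := Complex.exp ((Real.pi / (d+1) : ℝ) * Complex.I) with hz2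
        have hz2abs : ‖z2‖ = 1 := by
          rw [hz2]; exact Complex.norm_exp_ofReal_mul_I _
        have hz2pow : z2 ^ (d+1) = -1 := by
          rw [hz2, ← Complex.exp_nat_mul]
          have hne : ((d:ℂ) + 1) ≠ 0 := by
            have : (0:ℝ) < (d:ℝ) + 1 := by positivity
            exact_mod_cast (by exact_mod_cast this.ne' : ((d:ℝ)+1) ≠ 0)
          have : ((d+1 : ℕ) : ℂ) * ((Real.pi / (d+1) : ℝ) : ℂ) * Complex.I
              = (Real.pi : ℂ) * Complex.I := by
            push_cast
            field_simp
          rw [← mul_assoc, this, Complex.exp_pi_mul_I]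
        obtain ⟨t2, ht2, h2⟩ := hA z2 hz2abs
        rw [hAC] at h2; simp at h2
        rw [hz2pow] at h2
        have h12 : (t1 : ℂ) = -(t2 : ℂ) := by rw [← h1, h2]; ring
        have h12' : t1 = -t2 := by exact_mod_cast h12
        have ht10 : t1 ≠ 0 := by
          intro h; apply hane; rw [h1, h]; simp
        exact ht10 (le_antisymm (by linarith) ht1)
      obtain ⟨r, hroot⟩ := Complex.exists_root (natDegree_pos_iff_degree_pos.mp hdpos)
      have hr0 : r ≠ 0 := fun h => h0 (by simpa [h] using hroot)
      by_cases hr1 : ‖r‖ = 1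
      · -- root on circle: double root
        have h2 : (X - C r)^2 ∣ A := by
          by_contra h2
          obtain ⟨B, hB⟩ := dvd_iff_isRoot.mpr hroot
          have hBr : B.eval r ≠ 0 := by
            intro hB0
            obtain ⟨B2, hB2⟩ := dvd_iff_isRoot.mpr hB0
            exact h2 ⟨B2, by rw [hB, hB2]; ring⟩
          exact key_contra (d+1) A B r hr1 hB hBr hA
        obtain ⟨B, hB⟩ := h2
        have hBne : B ≠ 0 := fun h => hA0 (by rw [hB, h, mul_zero])
        have hBdeg : B.natDegree ≤ 2 * d := by
          have hX2 : ((X - C r)^2 : ℂ[X]) ≠ 0 := pow_ne_zero _ (X_sub_C_ne_zero r)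
          have := natDegree_mul hX2 hBne
          rw [← hB, natDegree_pow, natDegree_X_sub_C] at this
          omega
        set B' : ℂ[X] := (-r) • B with hB'
        have hBB' : ∀ w : ℂ, B'.eval w = -r * B.eval w := by
          intro w; rw [hB']; simp
        have hB'cond0 : ∀ z : ℂ, ‖z‖ = 1 → z ≠ r →
            ∃ t : ℝ, 0 ≤ t ∧ B'.eval z = (t : ℂ) * z ^ d := by
          intro z hz hzr
          obtain ⟨t, ht, htz⟩ := hA z hz
          have hzz : z * (starRingEnd ℂ) z = 1 := circle_mul_conj hz
          have hrr : r * (starRingEnd ℂ) r = 1 := circle_mul_conj hr1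
          have hKc : (((‖z - r‖)^2 : ℝ) : ℂ)
              = (z - r) * (starRingEnd ℂ) (z - r) := by
            rw [Complex.mul_conj, Complex.normSq_eq_norm_sq]
            try push_cast
            try ring
          have hKne : (((‖z - r‖)^2 : ℝ) : ℂ) ≠ 0 := by
            have h1 : z - r ≠ 0 := sub_ne_zero.mpr hzr
            exact Complex.ofReal_ne_zero.mpr (pow_ne_zero 2 (norm_ne_zero_iff.mpr h1))
          have hid : (z - r)^2 = -(r * z) * ((z - r) * ((starRingEnd ℂ) z - (starRingEnd ℂ) r)) := by
            linear_combination (z - r) * r * hzz - (z - r) * z * hrr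
          refine ⟨t / (‖z - r‖)^2, by positivity, ?_⟩
          have hz0 := circle_ne_zero hz
          rw [hB, eval_mul, eval_pow, eval_sub, eval_X, eval_C] at htz
          have hconjsub : (starRingEnd ℂ) z - (starRingEnd ℂ) r = (starRingEnd ℂ) (z - r) :=
            (map_sub _ _ _).symm
          rw [hconjsub] at hid
          have hkey : z * (-r * ((((‖z - r‖)^2 : ℝ) : ℂ)) * B.eval z)
              = z * ((t : ℂ) * z ^ d) := by
            rw [hKc]
            linear_combination htz - B.eval z * hid
          have hkey' := mul_left_cancel₀ hz0 hkey
          have ht' : ((t / (‖z - r‖)^2 : ℝ) : ℂ)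
              = (t : ℂ) / (((‖z - r‖)^2 : ℝ) : ℂ) := by push_cast; ring
          rw [hBB', ht']
          rw [div_mul_eq_mul_div, eq_div_iff hKne]
          linear_combination hkey'
        have hB'cond : ∀ z : ℂ, ‖z‖ = 1 →
            ∃ t : ℝ, 0 ≤ t ∧ B'.eval z = (t : ℂ) * z ^ d := by
          intro z hz
          by_cases hzr : z = r
          · subst hzr
            exact cond_closed d B' z hz (fun w hw hwr => hB'cond0 w hw hwr)
          · exact hB'cond0 z hz hzr
        obtain ⟨Q, hQdeg, hQ⟩ := ih B' (le_trans (natDegree_smul_le _ _) hBdeg) hB'cond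
        refine ⟨(X - C r) * Q, ?_, ?_⟩
        · refine le_trans natDegree_mul_le ?_
          rw [natDegree_X_sub_C]; omega
        · intro z hz
          have hz0 := circle_ne_zero hz
          have hzz : z * (starRingEnd ℂ) z = 1 := circle_mul_conj hz
          have hrr : r * (starRingEnd ℂ) r = 1 := circle_mul_conj hr1
          have hQz := hQ z hz
          have hBz : B.eval z = -((starRingEnd ℂ) r) * B'.eval z := by
            rw [hBB' z]
            calc B.eval z = (r * (starRingEnd ℂ) r) * B.eval z := by rw [hrr]; ring
              _ = -(starRingEnd ℂ) r * (-r * B.eval z) := by ring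
          rw [hB, eval_mul, eval_pow, eval_sub, eval_X, eval_C, hBz, hQz]
          have habs2 : ((‖eval z ((X - C r) * Q)‖ ^ 2 : ℝ) : ℂ)
              = (((‖z - r‖)^2 : ℝ) : ℂ) * ((‖Q.eval z‖ ^ 2 : ℝ) : ℂ) := by
            rw [eval_mul, eval_sub, eval_X, eval_C, norm_mul, mul_pow]
            try push_cast
            try ring
          rw [habs2]
          have hKc : (((‖z - r‖)^2 : ℝ) : ℂ)
              = (z - r) * (starRingEnd ℂ) (z - r) := by
            rw [Complex.mul_conj, Complex.normSq_eq_norm_sq]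
            try push_cast
            try ring
          rw [hKc, map_sub]
          linear_combination (((‖Q.eval z‖ ^ 2 : ℝ) : ℂ) * z ^ d * (z - r)) * hrr
            - (((‖Q.eval z‖ ^ 2 : ℝ) : ℂ) * z ^ d * (z - r)) * hzz
      · -- |r| ≠ 1 : paired root s = (conj r)⁻¹
        have hcr0 : (starRingEnd ℂ) r ≠ 0 := by simpa using hr0
        set s : ℂ := ((starRingEnd ℂ) r)⁻¹ with hs
        have hs0 : s ≠ 0 := inv_ne_zero hcr0
        have hsroot : A.eval s = 0 := by
          have hN : (A.map (starRingEnd ℂ)).natDegree ≤ 2 * (d+1) :=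
            le_trans natDegree_map_le hdeg
          have := eval_reflect (2*(d+1)) (A.map (starRingEnd ℂ)) hN s hs0
          rw [hsym] at this
          rw [this]
          have hsinv : s⁻¹ = (starRingEnd ℂ) r := by rw [hs, inv_inv]
          rw [hsinv, eval_map_conj A r]
          have hre : A.eval r = 0 := hroot
          rw [hre, map_zero, mul_zero]
        have hrs : s ≠ r := by
          intro h
          apply hr1
          have hr' : r = ((starRingEnd ℂ) r)⁻¹ := h.symm.trans hs
          have hmul : r * (starRingEnd ℂ) r = 1 := by
            nth_rewrite 1 [hr']
            exact inv_mul_cancel₀ hcr0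
          have h2 : Complex.normSq r = 1 := by
            rw [Complex.mul_conj] at hmul
            exact_mod_cast hmul
          rw [← Complex.sq_norm] at h2
          nlinarith [norm_nonneg r]
        obtain ⟨B1, hB1⟩ := dvd_iff_isRoot.mpr hroot
        have hB1s : B1.eval s = 0 := by
          rw [hB1, eval_mul, eval_sub, eval_X, eval_C] at hsroot
          rcases mul_eq_zero.mp hsroot with h | h
          · exact absurd (by linear_combination h) hrs
          · exact h
        obtain ⟨B, hB2⟩ := dvd_iff_isRoot.mpr hB1s
        have hB : A = (X - C r) * (X - C s) * B := by rw [hB1, hB2, mul_assoc]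
        have hBne : B ≠ 0 := fun h => hA0 (by rw [hB, h, mul_zero])
        have hBdeg : B.natDegree ≤ 2 * d := by
          have hX2 : ((X - C r) * (X - C s) : ℂ[X]) ≠ 0 :=
            mul_ne_zero (X_sub_C_ne_zero r) (X_sub_C_ne_zero s)
          have h1 := natDegree_mul hX2 hBne
          have h2 := natDegree_mul (X_sub_C_ne_zero r) (X_sub_C_ne_zero s)
          rw [← hB] at h1
          rw [natDegree_X_sub_C, natDegree_X_sub_C] at h2
          omega
        set B' : ℂ[X] := (-((starRingEnd ℂ) r)⁻¹) • B with hB'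
        have hBB' : ∀ w : ℂ, B'.eval w = -((starRingEnd ℂ) r)⁻¹ * B.eval w := by
          intro w; rw [hB']; simp
        have hB'cond : ∀ z : ℂ, ‖z‖ = 1 →
            ∃ t : ℝ, 0 ≤ t ∧ B'.eval z = (t : ℂ) * z ^ d := by
          intro z hz
          obtain ⟨t, ht, htz⟩ := hA z hz
          have hz0 := circle_ne_zero hz
          have hzz : z * (starRingEnd ℂ) z = 1 := circle_mul_conj hz
          have hzr : z ≠ r := fun h => hr1 (by rw [← h]; exact hz)
          have hKne : (((‖z - r‖)^2 : ℝ) : ℂ) ≠ 0 :=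
            Complex.ofReal_ne_zero.mpr (pow_ne_zero 2 (norm_ne_zero_iff.mpr (sub_ne_zero.mpr hzr)))
          have hKc : (((‖z - r‖)^2 : ℝ) : ℂ)
              = (z - r) * (starRingEnd ℂ) (z - r) := by
            rw [Complex.mul_conj, Complex.normSq_eq_norm_sq]
          have hid : ((starRingEnd ℂ) r) * ((z - r) * (z - s))
              = -z * ((z - r) * ((starRingEnd ℂ) (z - r))) := by
            rw [map_sub]
            have hcrs : (starRingEnd ℂ) r * s = 1 := by rw [hs]; field_simp
            linear_combination (z - r) * hzz + (r - z) * hcrs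
          rw [hB, eval_mul, eval_mul, eval_sub, eval_sub, eval_X, eval_C, eval_C] at htz
          refine ⟨t / (‖z - r‖)^2, by positivity, ?_⟩
          have hkey1 : z * ((((‖z - r‖)^2 : ℝ) : ℂ) * B.eval z)
              = z * (-(starRingEnd ℂ) r * (t : ℂ) * z ^ d) := by
            rw [hKc]
            linear_combination B.eval z * hid - (starRingEnd ℂ) r * htz
          have hkey2 := mul_left_cancel₀ hz0 hkey1
          have ht' : ((t / (‖z - r‖)^2 : ℝ) : ℂ)
              = (t : ℂ) / (((‖z - r‖)^2 : ℝ) : ℂ) := by push_cast; ring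
          rw [hBB', ht']
          rw [div_mul_eq_mul_div, eq_div_iff hKne]
          have hinv : ((starRingEnd ℂ) r)⁻¹ * (starRingEnd ℂ) r = 1 := inv_mul_cancel₀ hcr0
          linear_combination (-(((starRingEnd ℂ) r)⁻¹)) * hkey2 + ((t : ℂ) * z ^ d) * hinv
        obtain ⟨Q, hQdeg, hQ⟩ := ih B' (le_trans (natDegree_smul_le _ _) hBdeg) hB'cond
        refine ⟨(X - C r) * Q, ?_, ?_⟩
        · refine le_trans natDegree_mul_le ?_
          rw [natDegree_X_sub_C]; omega
        · intro z hz
          have hz0 := circle_ne_zero hz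
          have hzz : z * (starRingEnd ℂ) z = 1 := circle_mul_conj hz
          have hinv2 : (starRingEnd ℂ) r * ((starRingEnd ℂ) r)⁻¹ = 1 := mul_inv_cancel₀ hcr0
          have hQz := hQ z hz
          have hBz : B.eval z = -((starRingEnd ℂ) r) * B'.eval z := by
            rw [hBB' z]
            linear_combination (-(B.eval z)) * hinv2
          have hid : ((starRingEnd ℂ) r) * ((z - r) * (z - s))
              = -z * ((z - r) * ((starRingEnd ℂ) (z - r))) := by
            rw [map_sub]
            have hcrs : (starRingEnd ℂ) r * s = 1 := by rw [hs]; field_simp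
            linear_combination (z - r) * hzz + (r - z) * hcrs
          rw [hB, eval_mul, eval_mul, eval_sub, eval_sub, eval_X, eval_C, eval_C, hBz, hQz]
          have habs2 : ((‖eval z ((X - C r) * Q)‖ ^ 2 : ℝ) : ℂ)
              = (((‖z - r‖)^2 : ℝ) : ℂ) * ((‖Q.eval z‖ ^ 2 : ℝ) : ℂ) := by
            rw [eval_mul, eval_sub, eval_X, eval_C, norm_mul, mul_pow]
            try push_cast
            try ring
          rw [habs2]
          have hKc : (((‖z - r‖)^2 : ℝ) : ℂ)
              = (z - r) * (starRingEnd ℂ) (z - r) := by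
            rw [Complex.mul_conj, Complex.normSq_eq_norm_sq]
          rw [hKc]
          linear_combination (-(((‖Q.eval z‖ ^ 2 : ℝ) : ℂ) * z ^ d)) * hid

lemma natDegree_reflect_le (N : ℕ) (p : ℂ[X]) (hp : p.natDegree ≤ N) :
    (p.reflect N).natDegree ≤ N := by
  rw [natDegree_le_iff_coeff_eq_zero]
  intro M hM
  rw [coeff_reflect]
  apply coeff_eq_zero_of_natDegree_lt
  calc p.natDegree ≤ N := hp
    _ < M := hM
    _ ≤ revAt N M := by rw [revAt_eq_self_of_lt hM]

/-- Completion lemma: for any polynomial `P ∈ ℂ[x]` of degree `d` with `|P(x)|² ≤ 1`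
on the unit circle, there exists `Q ∈ ℂ[x]` with `deg Q ≤ d` such that
`|P(x)|² + |Q(x)|² = 1` on the unit circle. -/
theorem stmt_13 (P : Polynomial ℂ)
    (hP : ∀ x : ℂ, ‖x‖ = 1 → ‖P.eval x‖ ^ 2 ≤ 1) :
    ∃ Q : Polynomial ℂ, Q.natDegree ≤ P.natDegree ∧
      ∀ x : ℂ, ‖x‖ = 1 →
        ‖P.eval x‖ ^ 2 + ‖Q.eval x‖ ^ 2 = 1 := by
  set d := P.natDegree with hd
  set Pc : ℂ[X] := P.map (starRingEnd ℂ) with hPc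
  set A : ℂ[X] := X ^ d - P * Pc.reflect d with hA
  have hPcdeg : Pc.natDegree ≤ d := le_trans natDegree_map_le le_rfl
  have hAdeg : A.natDegree ≤ 2 * d := by
    rw [hA]
    apply le_trans (natDegree_sub_le _ _)
    apply max_le
    · rw [natDegree_X_pow]; omega
    · apply le_trans natDegree_mul_le
      have := natDegree_reflect_le d Pc hPcdeg
      omega
  have hAcond : ∀ z : ℂ, ‖z‖ = 1 → ∃ t : ℝ, 0 ≤ t ∧ A.eval z = (t : ℂ) * z ^ d := by
    intro z hz
    have hz0 := circle_ne_zero hz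
    refine ⟨1 - ‖P.eval z‖ ^ 2, by linarith [hP z hz], ?_⟩
    rw [hA]
    rw [eval_sub, eval_pow, eval_X, eval_mul,
      eval_reflect d Pc hPcdeg z hz0, circle_inv hz, hPc, eval_map_conj]
    have hmc : P.eval z * (starRingEnd ℂ) (P.eval z)
        = ((‖P.eval z‖ ^ 2 : ℝ) : ℂ) := by
      rw [Complex.mul_conj, Complex.normSq_eq_norm_sq]
    push_cast at hmc ⊢
    linear_combination (-(z ^ d)) * hmc
  obtain ⟨Q, hQdeg, hQ⟩ := fejer_riesz d A hAdeg hAcond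
  refine ⟨Q, hQdeg, ?_⟩
  intro x hx
  have hx0 := circle_ne_zero hx
  have h1 := hQ x hx
  obtain ⟨t, ht, h2⟩ := hAcond x hx
  -- A.eval x computed two ways
  have h3 : A.eval x = ((1 - ‖P.eval x‖ ^ 2 : ℝ) : ℂ) * x ^ d := by
    rw [hA, eval_sub, eval_pow, eval_X, eval_mul,
      eval_reflect d Pc hPcdeg x hx0, circle_inv hx, hPc, eval_map_conj]
    have hmc : P.eval x * (starRingEnd ℂ) (P.eval x)
        = ((‖P.eval x‖ ^ 2 : ℝ) : ℂ) := by
      rw [Complex.mul_conj, Complex.normSq_eq_norm_sq]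
    push_cast at hmc ⊢
    linear_combination (-(x ^ d)) * hmc
  rw [h3] at h1
  have hxd : (x : ℂ) ^ d ≠ 0 := pow_ne_zero _ hx0
  have h4 : ((1 - ‖P.eval x‖ ^ 2 : ℝ) : ℂ)
      = ((‖Q.eval x‖ ^ 2 : ℝ) : ℂ) := mul_right_cancel₀ hxd h1
  have h5 : 1 - ‖P.eval x‖ ^ 2 = ‖Q.eval x‖ ^ 2 := by
    exact_mod_cast h4
  linarith
end
end
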